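/- arXiv:2207.01783 — 3 statements merged into one kernel-verified Lean document; each statement's English description precedes it below -/
import Mathlib

section
/- Let n ≥ 1, 0 < q < 1, and let λ(π) = q^{d_R(π)} / ψ(n,q) be the probability mass function of the RMJ-based ranking model with identity central ranking. For a top-k list π_k (an injective map {1,...,k} → [n]), define λ(π_k) as the sum of λ(π) over all full permutations π whose first k values agree with π_k. Then λ(π_k) = q^{d(π_k) + L(π_k)} · ψ(n-k, q) / ψ(n, q), where d(π_k) = Σ_{i=1}^{k-1} 1{π_k(i) > π_k(i+1)}·(n-i) and L(π_k) is the number of items x not among {π_k(1),...,π_k(k)} with x < π_k(k). -/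
open Finset

/-- ψ(n,q) = ∏_{i=1}^{n} (1 + q + ... + q^{i-1}). -/
def psi (n : ℕ) (q : ℝ) : ℝ := ∏ i ∈ Finset.range n, ∑ j ∈ Finset.range (i + 1), q ^ j

/-- Reverse major index of a full permutation. -/
def dR {n : ℕ} (π : Equiv.Perm (Fin n)) : ℕ :=
  ∑ i : Fin (n - 1),
    if π ⟨i.val + 1, by have := i.isLt; omega⟩ < π ⟨i.val, by have := i.isLt; omega⟩ then
      n - (i.val + 1) else 0

/-- Truncated reverse major index of a top-k list. -/
def dtop {n k : ℕ} (f : Fin k → Fin n) : ℕ :=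
  ∑ i : Fin (k - 1),
    if f ⟨i.val + 1, by have := i.isLt; omega⟩ < f ⟨i.val, by have := i.isLt; omega⟩ then
      n - (i.val + 1) else 0

/-- L(π_k): number of items not appearing in the top-k list that are smaller than its
last entry. -/
def Ltop {n k : ℕ} (f : Fin k → Fin n) : ℕ :=
  if h : 0 < k then
    (Finset.univ.filter
      (fun x : Fin n => x ∉ Finset.image f Finset.univ ∧ x < f ⟨k - 1, by omega⟩)).card
  else 0

lemma snoc_eq {n k : ℕ} (f : Fin k → Fin n) (y : Fin n) (i : Fin (k + 1)) :
    (Fin.snoc f y : Fin (k + 1) → Fin n) i = if h : i.val < k then f ⟨i.val, h⟩ else y := by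
  simp only [Fin.snoc]
  split_ifs with h
  · rw [cast_eq]; rfl
  · rw [cast_eq]

lemma snoc_lt {n k : ℕ} (f : Fin k → Fin n) (y : Fin n) (v : ℕ) (hv : v < k)
    (hv' : v < k + 1) : (Fin.snoc f y : Fin (k + 1) → Fin n) ⟨v, hv'⟩ = f ⟨v, hv⟩ := by
  rw [snoc_eq, dif_pos hv]

lemma snoc_last' {n k : ℕ} (f : Fin k → Fin n) (y : Fin n) (hv : k < k + 1) :
    (Fin.snoc f y : Fin (k + 1) → Fin n) ⟨k, hv⟩ = y := by
  rw [snoc_eq, dif_neg (lt_irrefl k)]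

lemma snoc_inj {n k : ℕ} {f : Fin k → Fin n} (hf : Function.Injective f) {y : Fin n}
    (hy : y ∉ Finset.image f Finset.univ) : Function.Injective ((Fin.snoc f y : Fin (k + 1) → Fin n)) := by
  intro a b hab
  rw [snoc_eq, snoc_eq] at hab
  split_ifs at hab with h1 h2 h2
  · have h3 := congrArg Fin.val (hf hab)
    exact Fin.ext h3
  · exact absurd (Finset.mem_image.mpr ⟨_, Finset.mem_univ _, hab⟩) hy
  · exact absurd (Finset.mem_image.mpr ⟨_, Finset.mem_univ _, hab.symm⟩) hy
  · apply Fin.ext; omega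

lemma image_snoc {n k : ℕ} (f : Fin k → Fin n) (y : Fin n) :
    Finset.image ((Fin.snoc f y : Fin (k + 1) → Fin n)) Finset.univ = insert y (Finset.image f Finset.univ) := by
  ext x
  simp only [Finset.mem_image, Finset.mem_insert, Finset.mem_univ, true_and]
  constructor
  · rintro ⟨i, rfl⟩
    rw [snoc_eq]
    split_ifs with h
    · exact Or.inr ⟨_, rfl⟩
    · exact Or.inl rfl
  · rintro (rfl | ⟨i, rfl⟩)
    · exact ⟨⟨k, by omega⟩, snoc_last' f x _⟩
    · exact ⟨⟨i.val, by omega⟩, by rw [snoc_lt f y i.val i.isLt]⟩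

def dG {n k : ℕ} (f : Fin k → Fin n) (v : ℕ) : ℕ :=
  if h : v + 1 < k then (if f ⟨v + 1, h⟩ < f ⟨v, by omega⟩ then n - (v + 1) else 0) else 0

lemma dtop_eq_range {n k : ℕ} (f : Fin k → Fin n) :
    dtop f = ∑ v ∈ Finset.range (k - 1), dG f v := by
  rw [dtop, ← Fin.sum_univ_eq_sum_range (dG f) (k - 1)]
  apply Finset.sum_congr rfl
  intro i _
  have h : i.val + 1 < k := by have := i.isLt; omega
  rw [dG, dif_pos h]

lemma dtop_snoc {n k : ℕ} (hk : 1 ≤ k) (f : Fin k → Fin n) (y : Fin n) :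
    dtop ((Fin.snoc f y : Fin (k + 1) → Fin n)) = dtop f + (if y < f ⟨k - 1, by omega⟩ then n - k else 0) := by
  rw [dtop_eq_range, dtop_eq_range]
  have hk1 : k + 1 - 1 = (k - 1) + 1 := by omega
  rw [hk1, Finset.sum_range_succ]
  congr 1
  · apply Finset.sum_congr rfl
    intro v hv
    rw [Finset.mem_range] at hv
    have h1 : v + 1 < k := by omega
    have h1' : v + 1 < k + 1 := by omega
    rw [dG, dG, dif_pos h1, dif_pos h1',
      snoc_lt f y (v+1) h1 h1', snoc_lt f y v (by omega) (by omega)]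
  · have h2 : (k - 1) + 1 < k + 1 := by omega
    have h2' : (k - 1) + 1 = k := by omega
    rw [dG, dif_pos h2]
    have e1 : (Fin.snoc f y : Fin (k + 1) → Fin n) ⟨k - 1 + 1, h2⟩ = y := by
      have : (⟨k - 1 + 1, h2⟩ : Fin (k+1)) = ⟨k, by omega⟩ := by
        simp only [Fin.mk.injEq]; omega
      rw [this, snoc_last']
    have e2 : (Fin.snoc f y : Fin (k + 1) → Fin n) ⟨k - 1, by omega⟩ = f ⟨k - 1, by omega⟩ :=
      snoc_lt f y (k-1) (by omega) (by omega)
    have h3 : n - (k - 1 + 1) = n - k := by omega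
    rw [e1, e2, h3]

lemma Ltop_snoc {n k : ℕ} (hk : 1 ≤ k) {f : Fin k → Fin n} {y : Fin n}
    (hy : y ∉ Finset.image f Finset.univ) :
    Ltop ((Fin.snoc f y : Fin (k + 1) → Fin n)) =
      ((Finset.univ \ Finset.image f Finset.univ).filter (· < y)).card := by
  rw [Ltop, dif_pos (by omega : 0 < k + 1)]
  congr 1
  ext x
  have hl : ((Fin.snoc f y : Fin (k + 1) → Fin n)) ⟨k + 1 - 1, by omega⟩ = y := by
    have : (⟨k + 1 - 1, by omega⟩ : Fin (k+1)) = ⟨k, by omega⟩ := by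
      simp only [Fin.mk.injEq]; omega
    rw [this, snoc_last']
  simp only [Finset.mem_filter, Finset.mem_univ, true_and, Finset.mem_sdiff, hl, image_snoc,
    Finset.mem_insert]
  have hne : x < y → ¬ x = y := fun h he => absurd (he ▸ h) (lt_irrefl _)
  tauto


/-- The `j`-th element (in increasing order) of `s` is `< c` iff `j` is less than the
number of elements of `s` below `c`. -/
lemma orderIso_lt_iff {n m : ℕ} (s : Finset (Fin n)) (h : s.card = m)
    (c : Fin n) (j : Fin m) :
    (↑(s.orderIsoOfFin h j) < c) ↔ j.val < (s.filter (· < c)).card := by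
  set e := s.orderIsoOfFin h with he
  set t : Finset (Fin m) := univ.filter (fun i : Fin m => (e i : Fin n) < c) with ht
  have himg : s.filter (· < c) = t.image (fun i => (↑(e i) : Fin n)) := by
    ext x
    simp only [Finset.mem_filter, Finset.mem_image, ht, Finset.mem_univ, true_and]
    constructor
    · rintro ⟨hxs, hxc⟩
      refine ⟨e.symm ⟨x, hxs⟩, ?_, ?_⟩ <;> rw [e.apply_symm_apply]
      · exact hxc
    · rintro ⟨i, hic, rfl⟩
      exact ⟨(e i).2, hic⟩
  have hcard : (s.filter (· < c)).card = t.card := by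
    rw [himg]
    exact Finset.card_image_of_injective _
      (fun a b hab => e.injective (Subtype.coe_injective hab))
  have hdc : ∀ i i' : Fin m, i' ≤ i → i ∈ t → i' ∈ t := by
    intro i i' hle hi
    simp only [ht, Finset.mem_filter, Finset.mem_univ, true_and] at hi ⊢
    exact lt_of_le_of_lt (Subtype.coe_le_coe.mpr (e.monotone hle)) hi
  have hmem : (↑(e j) < c) ↔ j ∈ t := by
    simp [ht]
  rw [hmem, hcard]
  constructor
  · intro hj
    have hsub : Finset.Iic j ⊆ t := fun i hi => hdc j i (Finset.mem_Iic.mp hi) hj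
    have := Finset.card_le_card hsub
    rw [Fin.card_Iic] at this
    omega
  · intro hj
    by_contra hnot
    have hsub : t ⊆ Finset.Iio j := by
      intro i hi
      rw [Finset.mem_Iio]
      by_contra hge
      exact hnot (hdc i j (le_of_not_gt hge) hi)
    have := Finset.card_le_card hsub
    rw [Fin.card_Iio] at this
    omega

/-- Key geometric-sum identity. -/
lemma key_sum (m L : ℕ) (hL : L ≤ m) (q : ℝ) (hq : q ≠ 1) :
    ∑ j ∈ Finset.range m, q ^ ((if j < L then m else 0) + j)
      = q ^ L * ∑ j ∈ Finset.range m, q ^ j := by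
  have h1 : ∀ j ∈ Finset.range m, q ^ ((if j < L then m else 0) + j)
      = if j < L then q ^ m * q ^ j else q ^ j := by
    intro j _; split_ifs <;> rw [pow_add] <;> ring
  rw [Finset.sum_congr rfl h1, Finset.sum_ite]
  have h2 : (Finset.range m).filter (· < L) = Finset.range L := by
    ext j; simp; omega
  have h3 : (Finset.range m).filter (fun j => ¬ j < L) = Finset.Ico L m := by
    ext j; simp; omega
  rw [h2, h3, ← Finset.mul_sum, Finset.range_eq_Ico,
    Finset.sum_Ico_eq_sub _ hL]
  have hq1 : q - 1 ≠ 0 := sub_ne_zero.mpr hq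
  rw [← Finset.range_eq_Ico, geom_sum_eq hq, geom_sum_eq hq]
  field_simp
  ring

lemma rank_eq {n m : ℕ} (s : Finset (Fin n)) (h : s.card = m) (j : Fin m) :
    (s.filter (· < ↑(s.orderIsoOfFin h j))).card = j.val := by
  have h1 := orderIso_lt_iff s h (↑(s.orderIsoOfFin h j)) j
  have hle : (s.filter (· < ↑(s.orderIsoOfFin h j))).card ≤ j.val := by
    by_contra hc
    exact absurd (h1.mpr (by omega)) (lt_irrefl _)
  rcases Nat.eq_zero_or_pos j.val with h0 | hpos
  · omega
  · have hij : (⟨j.val - 1, by omega⟩ : Fin m) < j := by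
      simp only [Fin.lt_def]; omega
    have h2 : (↑(s.orderIsoOfFin h ⟨j.val - 1, by omega⟩) : Fin n)
        < ↑(s.orderIsoOfFin h j) :=
      Subtype.coe_lt_coe.mpr ((s.orderIsoOfFin h).lt_iff_lt.mpr hij)
    have h3 := (orderIso_lt_iff s h (↑(s.orderIsoOfFin h j)) ⟨j.val - 1, by omega⟩).mp h2
    simp only at h3
    omega

lemma Pf_eq (n : ℕ) (q : ℝ) (hq1 : q < 1) :
    ∀ d k, 1 ≤ k → ∀ (hkn : k ≤ n), n - k = d → ∀ (f : Fin k → Fin n),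
      Function.Injective f →
    (∑ π : Equiv.Perm (Fin n),
        if ∀ i : Fin k, π (Fin.castLE hkn i) = f i then q ^ dR π else 0)
      = q ^ (dtop f + Ltop f) * psi (n - k) q := by
  intro d
  induction d with
  | zero =>
    intro k hk hkn hd f hf
    obtain rfl : k = n := by omega
    have hbij : Function.Bijective f := Finite.injective_iff_bijective.mp hf
    set πf := Equiv.ofBijective f hbij with hπf
    rw [Finset.sum_eq_single πf]
    · have hcond : ∀ i : Fin k, πf (Fin.castLE hkn i) = f i := fun i => rfl
      rw [if_pos hcond]
      have hL : Ltop f = 0 := by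
        rw [Ltop, dif_pos (by omega : 0 < k)]
        rw [Finset.image_univ_of_surjective hbij.surjective]
        simp
      have hdR : dR πf = dtop f := rfl
      rw [hdR, hL, Nat.sub_self, add_zero]
      simp [psi]
    · intro π _ hne
      rw [if_neg]
      intro hA
      exact hne (Equiv.ext (fun x => hA x))
    · intro h
      exact absurd (Finset.mem_univ πf) h
  | succ d ih =>
    intro k hk hkn hd f hf
    have hkn' : k < n := by omega
    have hk1n : k + 1 ≤ n := hkn'
    set s : Finset (Fin n) := Finset.univ \ Finset.image f Finset.univ with hs
    have hscard : s.card = d + 1 := by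
      rw [hs, Finset.card_sdiff_of_subset (Finset.subset_univ _), Finset.card_univ, Fintype.card_fin,
        Finset.card_image_of_injective _ hf, Finset.card_univ, Fintype.card_fin]
      omega
    -- Step A: partition by the (k+1)-st value
    have hstep : (∑ π : Equiv.Perm (Fin n),
          if ∀ i : Fin k, π (Fin.castLE hkn i) = f i then q ^ dR π else 0)
        = ∑ y ∈ s, ∑ π : Equiv.Perm (Fin n),
            if ∀ i : Fin (k + 1), π (Fin.castLE hk1n i) = (Fin.snoc f y : Fin (k + 1) → Fin n) i
            then q ^ dR π else 0 := by
      have h1 : ∀ π : Equiv.Perm (Fin n),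
          (if ∀ i : Fin k, π (Fin.castLE hkn i) = f i then q ^ dR π else 0)
          = ∑ y : Fin n, if (∀ i : Fin k, π (Fin.castLE hkn i) = f i) ∧ π ⟨k, hkn'⟩ = y
              then q ^ dR π else 0 := by
        intro π
        rw [Finset.sum_eq_single (π ⟨k, hkn'⟩)]
        · by_cases hA : ∀ i : Fin k, π (Fin.castLE hkn i) = f i
          · rw [if_pos hA, if_pos ⟨hA, rfl⟩]
          · rw [if_neg hA, if_neg (fun h => hA h.1)]
        · intro y _ hy
          rw [if_neg (fun h => hy h.2.symm)]
        · intro h; exact absurd (Finset.mem_univ _) h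
      rw [Finset.sum_congr rfl (fun π _ => h1 π), Finset.sum_comm]
      rw [← Finset.sum_subset (Finset.subset_univ s) (by
        intro y _ hy
        have hy' : y ∈ Finset.image f Finset.univ := by
          by_contra hc
          exact hy (by rw [hs]; exact Finset.mem_sdiff.mpr ⟨Finset.mem_univ _, hc⟩)
        obtain ⟨i0, _, hi0⟩ := Finset.mem_image.mp hy'
        apply Finset.sum_eq_zero
        intro π _
        rw [if_neg]
        rintro ⟨hA, hky⟩
        have h3 : π (Fin.castLE hkn i0) = y := by rw [hA i0, hi0]
        have h4 : Fin.castLE hkn i0 = (⟨k, hkn'⟩ : Fin n) :=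
          π.injective (h3.trans hky.symm)
        have h5 := congrArg Fin.val h4
        simp only [Fin.coe_castLE] at h5
        have := i0.isLt
        omega)]
      apply Finset.sum_congr rfl
      intro y hy
      apply Finset.sum_congr rfl
      intro π _
      apply if_congr _ rfl rfl
      constructor
      · rintro ⟨hA, hky⟩ i
        rw [snoc_eq]
        split_ifs with hi
        · have he : Fin.castLE hk1n i = Fin.castLE hkn ⟨i.val, hi⟩ := rfl
          rw [he, hA ⟨i.val, hi⟩]
        · have hik : i.val = k := by have := i.isLt; omega
          have he : Fin.castLE hk1n i = (⟨k, hkn'⟩ : Fin n) := by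
            apply Fin.ext
            simp only [Fin.coe_castLE]
            omega
          rw [he, hky]
      · intro hB
        refine ⟨fun i => ?_, ?_⟩
        · have he : Fin.castLE hkn i = Fin.castLE hk1n ⟨i.val, by omega⟩ := rfl
          rw [he, hB ⟨i.val, by omega⟩, snoc_lt f y i.val i.isLt]
        · have he : (⟨k, hkn'⟩ : Fin n) = Fin.castLE hk1n ⟨k, by omega⟩ := rfl
          rw [he, hB ⟨k, by omega⟩, snoc_last']
    rw [hstep]
    -- Step B: apply the inductive hypothesis to each extension
    have hB : ∀ y ∈ s, (∑ π : Equiv.Perm (Fin n),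
          if ∀ i : Fin (k + 1), π (Fin.castLE hk1n i) = (Fin.snoc f y : Fin (k + 1) → Fin n) i
          then q ^ dR π else 0)
        = q ^ (dtop f + ((if y < f ⟨k - 1, by omega⟩ then n - k else 0)
            + (s.filter (· < y)).card)) * psi d q := by
      intro y hy
      have hynot : y ∉ Finset.image f Finset.univ := (Finset.mem_sdiff.mp hy).2
      rw [ih (k+1) (by omega) hk1n (by omega) _ (snoc_inj hf hynot)]
      rw [dtop_snoc hk f y, Ltop_snoc hk hynot]
      have : n - (k + 1) = d := by omega
      rw [this, add_assoc]
    rw [Finset.sum_congr rfl hB]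
    -- Step C: reindex the sum over s by the order isomorphism
    set c : Fin n := f ⟨k - 1, by omega⟩ with hc
    set L : ℕ := (s.filter (· < c)).card with hL
    have hLf : Ltop f = L := by
      rw [Ltop, dif_pos (by omega : 0 < k), hL]
      congr 1
      ext x
      simp only [Finset.mem_filter, Finset.mem_univ, true_and, hs, Finset.mem_sdiff, hc]
    set e := s.orderIsoOfFin hscard with he
    set F : Fin n → ℝ := fun y =>
      q ^ (dtop f + ((if y < c then n - k else 0) + (s.filter (· < y)).card)) * psi d q
      with hF
    have hre : ∑ y ∈ s, F y = ∑ i : Fin (d + 1), F ↑(e i) := by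
      rw [← Finset.sum_attach s F]
      exact (Fintype.sum_equiv e.toEquiv (fun i => F ↑(e i)) (fun a => F ↑a)
        (fun i => rfl)).symm
    rw [hre]
    have hterm : ∀ i : Fin (d + 1),
        F ↑(e i) = q ^ dtop f * psi d q
          * q ^ ((if i.val < L then n - k else 0) + i.val) := by
      intro i
      rw [hF]
      have h1 : ((↑(e i) : Fin n) < c) = (i.val < L) := by
        rw [eq_iff_iff, hL]
        exact orderIso_lt_iff s hscard c i
      have h2 : (s.filter (· < ↑(e i))).card = i.val := rank_eq s hscard i
      simp only [h1, h2, pow_add]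
      ring
    rw [Finset.sum_congr rfl (fun i _ => hterm i), ← Finset.mul_sum]
    have hm : n - k = d + 1 := hd
    have hLle : L ≤ d + 1 := by
      rw [hL, ← hscard]
      exact Finset.card_filter_le s _
    have hsum : ∑ i : Fin (d + 1), q ^ ((if i.val < L then n - k else 0) + i.val)
        = q ^ L * ∑ j ∈ Finset.range (d + 1), q ^ j := by
      rw [Fin.sum_univ_eq_sum_range (fun v => q ^ ((if v < L then n - k else 0) + v)) (d + 1)]
      rw [hm]
      exact key_sum (d + 1) L hLle q (ne_of_lt hq1)
    rw [hsum, hm, hLf]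
    have hpsi : psi (d + 1) q = psi d q * ∑ j ∈ Finset.range (d + 1), q ^ j := by
      rw [psi, psi, Finset.prod_range_succ]
    rw [hpsi, pow_add]
    ring

theorem stmt3 (n k : ℕ) (hk : 1 ≤ k) (hkn : k ≤ n) (q : ℝ) (hq0 : 0 < q) (hq1 : q < 1)
    (f : Fin k → Fin n) (hf : Function.Injective f) :
    (∑ π : Equiv.Perm (Fin n),
        if ∀ i : Fin k, π (Fin.castLE hkn i) = f i then q ^ dR π / psi n q else 0)
      = q ^ (dtop f + Ltop f) * psi (n - k) q / psi n q := by
  have h := Pf_eq n q hq1 (n - k) k hk hkn rfl f hf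
  have h2 : ∀ π : Equiv.Perm (Fin n),
      (if ∀ i : Fin k, π (Fin.castLE hkn i) = f i then q ^ dR π / psi n q else 0)
      = (if ∀ i : Fin k, π (Fin.castLE hkn i) = f i then q ^ dR π else 0) / psi n q := by
    intro π
    split_ifs
    · rfl
    · simp
  rw [Finset.sum_congr rfl (fun π _ => h2 π), ← Finset.sum_div, h]
end

section
/- Fix n ≥ 3 and q ∈ (0,1), and consider the Mallows model on permutations of [n] with identity central ranking. The probability that item n-1 precedes item n (i.e., is more preferred) in a random permutation, restricted to the information contained in the top n-2 positions, satisfies: Pr(item n-1 appears in the top n-2 positions and is preferred to item n there, or both appear in top n-2 with n-1 first) = (1 - (1-q)(1-q²)/((1-q^{n-1})(1-q^n))) · 1/(1+q). -/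
open Finset

/-- Kendall tau distance (inversion count) of a full permutation from the identity. -/
def dK {n : ℕ} (π : Equiv.Perm (Fin n)) : ℕ :=
  ∑ i : Fin n, ∑ j : Fin n, if i < j ∧ π j < π i then 1 else 0


def ins (m : ℕ) (k : Fin (m+1)) (e : Equiv.Perm (Fin m)) : Equiv.Perm (Fin (m+1)) :=
  (finSuccEquiv' k).trans ((e.optionCongr).trans (finSuccEquivLast).symm)

lemma ins_self (m : ℕ) (k : Fin (m+1)) (e : Equiv.Perm (Fin m)) : ins m k e k = Fin.last m := by
  simp [ins]

lemma ins_succAbove (m : ℕ) (k : Fin (m+1)) (e : Equiv.Perm (Fin m)) (i : Fin m) :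
    ins m k e (k.succAbove i) = (e i).castSucc := by
  simp [ins]

lemma count_aux (m : ℕ) (k : Fin (m+1)) (q : ℝ) :
    ∑ j : Fin m, (if k ≤ j.castSucc then 1 else 0) = m - k.val := by
  have h1 : ∀ j : Fin m, (if k ≤ j.castSucc then 1 else 0) = (if k.val ≤ j.val then 1 else 0) := by
    intro j; simp [Fin.le_def]
  simp only [h1]
  rw [Fin.sum_univ_eq_sum_range (fun j => if k.val ≤ j then 1 else 0) m]
  rw [Finset.range_eq_Ico, ← Finset.sum_Ico_consecutive _ (Nat.zero_le k.val) (by omega : k.val ≤ m)]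
  rw [Finset.sum_congr rfl (fun j hj => if_neg (by simp at hj; omega)),
      Finset.sum_congr rfl (fun j hj => if_pos (by simp at hj; omega))]
  simp

lemma dK_ins (m : ℕ) (k : Fin (m+1)) (e : Equiv.Perm (Fin m)) :
    dK (ins m k e) = dK e + (m - k.val) := by
  unfold dK
  rw [Fin.sum_univ_succAbove (fun i => ∑ j, if i < j ∧ ins m k e j < ins m k e i then 1 else 0) k]
  have hterm1 : (∑ j, if k < j ∧ ins m k e j < ins m k e k then 1 else 0) = m - k.val := by
    rw [Fin.sum_univ_succAbove (fun j => if k < j ∧ ins m k e j < ins m k e k then 1 else 0) k]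
    rw [if_neg (by simp)]
    rw [← count_aux m k 1]
    rw [zero_add]
    refine Finset.sum_congr rfl fun j _ => ?_
    rw [ins_self, ins_succAbove]
    congr 1
    simp only [eq_iff_iff]
    constructor
    · rintro ⟨h1, _⟩
      exact (Fin.lt_succAbove_iff_le_castSucc k j).mp h1
    · intro h
      exact ⟨(Fin.lt_succAbove_iff_le_castSucc k j).mpr h, Fin.castSucc_lt_last _⟩
  have hterm2 : ∀ i : Fin m,
      (∑ j, if k.succAbove i < j ∧ ins m k e j < ins m k e (k.succAbove i) then 1 else 0)
      = ∑ j, if i < j ∧ e j < e i then 1 else 0 := by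
    intro i
    rw [Fin.sum_univ_succAbove
      (fun j => if k.succAbove i < j ∧ ins m k e j < ins m k e (k.succAbove i) then 1 else 0) k]
    rw [if_neg (by
      rw [ins_self, ins_succAbove]
      rintro ⟨-, h2⟩
      exact absurd h2 (Fin.not_lt.mpr (Fin.le_last _)))]
    rw [zero_add]
    refine Finset.sum_congr rfl fun j _ => ?_
    rw [ins_succAbove, ins_succAbove]
    congr 1
    simp only [eq_iff_iff]
    rw [Fin.succAbove_lt_succAbove_iff, Fin.castSucc_lt_castSucc_iff]
  rw [hterm1, Finset.sum_congr rfl (fun i _ => hterm2 i)]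
  omega

lemma ins_bijective (m : ℕ) :
    Function.Bijective (fun p : Fin (m+1) × Equiv.Perm (Fin m) => ins m p.1 p.2) := by
  rw [Fintype.bijective_iff_injective_and_card]
  constructor
  · rintro ⟨k, e⟩ ⟨k', e'⟩ h
    simp only at h
    have hk : k = k' := by
      by_contra hne
      obtain ⟨j, hj⟩ := Fin.exists_succAbove_eq hne
      have h1 : ins m k e k = Fin.last m := ins_self m k e
      have h2 : ins m k' e' k = (e' j).castSucc := by
        conv_lhs => rw [← hj]
        rw [ins_succAbove]
      rw [h] at h1; rw [h1] at h2
      exact absurd h2.symm (Fin.ne_last_of_lt (Fin.castSucc_lt_last _))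
    subst hk
    have he : e = e' := by
      apply Equiv.ext
      intro i
      have h2 := DFunLike.congr_fun h (k.succAbove i)
      rw [ins_succAbove, ins_succAbove] at h2
      exact Fin.castSucc_injective _ h2
    simp [he]
  · simp [Fintype.card_perm, Nat.factorial_succ]

lemma sum_q_dK (q : ℝ) : ∀ m : ℕ, ∑ π : Equiv.Perm (Fin m), q ^ dK π = psi m q := by
  intro m
  induction m with
  | zero =>
    rw [show psi 0 q = 1 from Finset.prod_range_zero _]
    rw [Fintype.sum_eq_single 1 (fun x hx => absurd (Subsingleton.elim x 1) hx)]
    simp [dK]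
  | succ m ih =>
    rw [← Fintype.sum_bijective _ (ins_bijective m) _ (fun π => q ^ dK π) (fun p => rfl)]
    simp only [dK_ins, pow_add]
    rw [Fintype.sum_prod_type]
    have : ∀ k : Fin (m+1), ∑ e : Equiv.Perm (Fin m), q ^ dK e * q ^ (m - k.val)
        = psi m q * q ^ (m - k.val) := by
      intro k; rw [← Finset.sum_mul, ih]
    rw [Finset.sum_congr rfl (fun k _ => this k), ← Finset.mul_sum]
    have hs : ∑ k : Fin (m+1), q ^ (m - k.val) = ∑ j ∈ Finset.range (m+1), q ^ j := by
      rw [Fin.sum_univ_eq_sum_range (fun j => q ^ (m - j)) (m+1)]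
      rw [← Finset.sum_range_reflect (fun j => q ^ j) (m+1)]
      exact Finset.sum_congr rfl fun j hj => rfl
    rw [hs]
    rw [show psi (m+1) q = psi m q * ∑ j ∈ Finset.range (m+1), q ^ j from Finset.prod_range_succ _ _]

def av (m : ℕ) : Fin (m+2) := ⟨m, by omega⟩
def bv (m : ℕ) : Fin (m+2) := ⟨m+1, by omega⟩

def emb (m : ℕ) (e : Equiv.Perm (Fin m)) (f : Equiv.Perm (Fin 2)) : Equiv.Perm (Fin (m+2)) :=
  (finSumFinEquiv.symm : Fin (m+2) ≃ Fin m ⊕ Fin 2).trans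
    ((Equiv.sumCongr e f).trans finSumFinEquiv)

lemma emb_castAdd (m : ℕ) (e : Equiv.Perm (Fin m)) (f : Equiv.Perm (Fin 2)) (i : Fin m) :
    emb m e f (Fin.castAdd 2 i) = Fin.castAdd 2 (e i) := by
  simp [emb]

lemma emb_natAdd (m : ℕ) (e : Equiv.Perm (Fin m)) (f : Equiv.Perm (Fin 2)) (y : Fin 2) :
    emb m e f (Fin.natAdd m y) = Fin.natAdd m (f y) := by
  simp [emb]

lemma sum_split (m : ℕ) (g : Fin (m+2) → ℕ) :
    ∑ i, g i = (∑ i : Fin m, g (Fin.castAdd 2 i)) + ∑ y : Fin 2, g (Fin.natAdd m y) := by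
  rw [← Equiv.sum_comp (finSumFinEquiv : Fin m ⊕ Fin 2 ≃ Fin (m+2)) g, Fintype.sum_sum_type]
  simp

lemma dK_emb (m : ℕ) (e : Equiv.Perm (Fin m)) (f : Equiv.Perm (Fin 2)) :
    dK (emb m e f) = dK e + dK f := by
  unfold dK
  rw [sum_split m (fun i => ∑ j, if i < j ∧ emb m e f j < emb m e f i then 1 else 0)]
  rw [Finset.sum_congr rfl (fun i _ => sum_split m
      (fun j => if Fin.castAdd 2 i < j ∧ emb m e f j < emb m e f (Fin.castAdd 2 i) then 1 else 0)),
    Finset.sum_congr rfl (fun y _ => sum_split m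
      (fun j => if Fin.natAdd m y < j ∧ emb m e f j < emb m e f (Fin.natAdd m y) then 1 else 0))]
  simp only [emb_castAdd, emb_natAdd]
  have c1 : ∀ i i' : Fin m,
      (if Fin.castAdd 2 i < Fin.castAdd 2 i' ∧ Fin.castAdd 2 (e i') < Fin.castAdd 2 (e i)
        then 1 else 0) = (if i < i' ∧ e i' < e i then 1 else 0) := by
    intro i i'
    refine if_congr ?_ rfl rfl
    simp only [Fin.lt_def, Fin.coe_castAdd]
  have c2 : ∀ (i : Fin m) (y : Fin 2),
      (if Fin.castAdd 2 i < Fin.natAdd m y ∧ Fin.natAdd m (f y) < Fin.castAdd 2 (e i)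
        then (1:ℕ) else 0) = 0 := by
    intro i y
    refine if_neg ?_
    rintro ⟨-, h⟩
    simp only [Fin.lt_def, Fin.coe_natAdd, Fin.coe_castAdd] at h
    have := (e i).isLt
    omega
  have c3 : ∀ (y : Fin 2) (i : Fin m),
      (if Fin.natAdd m y < Fin.castAdd 2 i ∧ Fin.castAdd 2 (e i) < Fin.natAdd m (f y)
        then (1:ℕ) else 0) = 0 := by
    intro y i
    refine if_neg ?_
    rintro ⟨h, -⟩
    simp only [Fin.lt_def, Fin.coe_natAdd, Fin.coe_castAdd] at h
    have := i.isLt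
    omega
  have c4 : ∀ y y' : Fin 2,
      (if Fin.natAdd m y < Fin.natAdd m y' ∧ Fin.natAdd m (f y') < Fin.natAdd m (f y)
        then (1:ℕ) else 0) = (if y < y' ∧ f y' < f y then 1 else 0) := by
    intro y y'
    refine if_congr ?_ rfl rfl
    simp only [Fin.lt_def, Fin.coe_natAdd]
    omega
  simp only [c1, c2, c3, c4, Finset.sum_const_zero, add_zero, zero_add]

lemma emb_symm_natAdd (m : ℕ) (e : Equiv.Perm (Fin m)) (f : Equiv.Perm (Fin 2)) (y : Fin 2) :
    (emb m e f).symm (Fin.natAdd m y) = Fin.natAdd m (f.symm y) := by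
  rw [Equiv.symm_apply_eq, emb_natAdd, Equiv.apply_symm_apply]

lemma av_eq (m : ℕ) : av m = Fin.natAdd m 0 := by
  simp [av, Fin.ext_iff]

lemma bv_eq (m : ℕ) : bv m = Fin.natAdd m 1 := by
  simp [bv, Fin.ext_iff]

/-- sum over the "A" block -/
lemma sumA (m : ℕ) (q : ℝ) :
    ∑ π ∈ Finset.univ.filter (fun π : Equiv.Perm (Fin (m+2)) =>
        m ≤ (π.symm (av m)).val ∧ m ≤ (π.symm (bv m)).val), q ^ dK π
      = psi m q * (1 + q) := by
  classical
  rw [← sum_q_dK q m, ← show psi 2 q = 1 + q by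
      rw [psi, Finset.prod_range_succ, Finset.prod_range_one, Finset.sum_range_one,
        Finset.sum_range_succ, Finset.sum_range_one, pow_zero, pow_one, one_mul]]
  rw [← sum_q_dK q 2, Finset.sum_mul_sum, ← Finset.sum_product', Finset.univ_product_univ]
  refine (Finset.sum_bij (fun p _ => emb m p.1 p.2) ?_ ?_ ?_ ?_).symm
  · rintro ⟨e, f⟩ -
    simp only [Finset.mem_filter, Finset.mem_univ, true_and]
    constructor
    · rw [av_eq, emb_symm_natAdd]; exact Nat.le_add_right _ _
    · rw [bv_eq, emb_symm_natAdd]; exact Nat.le_add_right _ _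
  · rintro ⟨e, f⟩ hm1 ⟨e', f'⟩ hm2 heq
    have he : e = e' := by
      apply Equiv.ext; intro i
      have h2 := DFunLike.congr_fun heq (Fin.castAdd 2 i)
      rw [emb_castAdd, emb_castAdd] at h2
      exact Fin.castAdd_injective _ _ h2
    have hf : f = f' := by
      apply Equiv.ext; intro y
      have h2 := DFunLike.congr_fun heq (Fin.natAdd m y)
      rw [emb_natAdd, emb_natAdd] at h2
      apply Fin.ext
      have := congrArg Fin.val h2
      simp only [Fin.coe_natAdd] at this
      omega
    simp [he, hf]
  · intro π hπ
    simp only [Finset.mem_filter, Finset.mem_univ, true_and] at hπ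
    -- key facts
    have hkey : ∀ x : Fin (m+2), m ≤ x.val → m ≤ (π x).val := by
      intro x hx
      set p1 := π.symm (av m) with hp1
      set p2 := π.symm (bv m) with hp2
      have hne : p1.val ≠ p2.val := by
        intro h
        have : p1 = p2 := Fin.ext h
        have h2 := congrArg π this
        rw [hp1, hp2, Equiv.apply_symm_apply, Equiv.apply_symm_apply] at h2
        have := congrArg Fin.val h2
        simp [av, bv] at this
      have hx12 : x = p1 ∨ x = p2 := by
        have i1 := p1.isLt; have i2 := p2.isLt; have ix := x.isLt
        have : x.val = p1.val ∨ x.val = p2.val := by omega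
        rcases this with h | h
        · exact Or.inl (Fin.ext h)
        · exact Or.inr (Fin.ext h)
      rcases hx12 with h | h
      · rw [h, hp1, Equiv.apply_symm_apply]; exact Nat.le_refl m |>.trans (by simp [av])
      · rw [h, hp2, Equiv.apply_symm_apply]; simp [bv]
    have hkey2 : ∀ x : Fin (m+2), x.val < m → (π x).val < m := by
      intro x hx
      by_contra h
      push_neg at h
      have hax : π x = av m ∨ π x = bv m := by
        have := (π x).isLt
        have : (π x).val = m ∨ (π x).val = m + 1 := by omega
        rcases this with h' | h'
        · exact Or.inl (Fin.ext (by simp [av, h']))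
        · exact Or.inr (Fin.ext (by simp [bv, h']))
      rcases hax with h' | h'
      · have := congrArg π.symm h'
        rw [Equiv.symm_apply_apply] at this
        rw [this] at hx; omega
      · have := congrArg π.symm h'
        rw [Equiv.symm_apply_apply] at this
        rw [this] at hx; omega
    set ge : Fin m → Fin m := fun i =>
      ⟨(π (Fin.castAdd 2 i)).val, hkey2 _ (by simpa using i.isLt)⟩ with hge
    set gf : Fin 2 → Fin 2 := fun y =>
      ⟨(π (Fin.natAdd m y)).val - m, by
        have h1 := hkey (Fin.natAdd m y) (by simp)
        have h2 := (π (Fin.natAdd m y)).isLt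
        omega⟩ with hgf
    have hgeinj : Function.Injective ge := by
      intro i i' h
      have hv := congrArg Fin.val h
      simp only [hge] at hv
      exact Fin.castAdd_injective _ _ (π.injective (Fin.ext hv))
    have hgfinj : Function.Injective gf := by
      intro y y' h
      have hv : (π (Fin.natAdd m y)).val = (π (Fin.natAdd m y')).val := by
        have h1 := hkey (Fin.natAdd m y) (by simp)
        have h2 := hkey (Fin.natAdd m y') (by simp)
        have := congrArg Fin.val h
        simp only [hgf] at this
        omega
      have h3 := congrArg Fin.val (π.injective (Fin.ext hv))
      simp only [Fin.coe_natAdd] at h3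
      exact Fin.ext (by omega)
    refine ⟨(Equiv.ofBijective ge (Finite.injective_iff_bijective.mp hgeinj),
             Equiv.ofBijective gf (Finite.injective_iff_bijective.mp hgfinj)),
        Finset.mem_univ _, ?_⟩
    apply Equiv.ext
    intro x
    by_cases hx : x.val < m
    · have hxe : x = Fin.castAdd 2 ⟨x.val, hx⟩ := Fin.ext rfl
      rw [hxe, emb_castAdd]
      apply Fin.ext
      simp [Equiv.ofBijective_apply, hge]
    · push_neg at hx
      have hxe : x = Fin.natAdd m ⟨x.val - m, by have := x.isLt; omega⟩ := Fin.ext (by simp; omega)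
      rw [hxe, emb_natAdd]
      apply Fin.ext
      have h1 := hkey x hx
      simp only [Equiv.ofBijective_apply, hgf, Fin.coe_natAdd]
      rw [← hxe]
      omega
  · rintro ⟨e, f⟩ -
    rw [dK_emb, pow_add]

def sw (m : ℕ) : Equiv.Perm (Fin (m+2)) := Equiv.swap (av m) (bv m)

lemma sw_val (m : ℕ) (x : Fin (m+2)) :
    ((sw m) x).val = if x.val = m then m+1 else if x.val = m+1 then m else x.val := by
  rcases eq_or_ne x (av m) with rfl | h1
  · rw [sw, Equiv.swap_apply_left]; simp [av, bv]
  rcases eq_or_ne x (bv m) with rfl | h2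
  · rw [sw, Equiv.swap_apply_right]
    have hne : m + 1 ≠ m := by omega
    simp [av, bv, hne]
  · rw [sw, Equiv.swap_apply_of_ne_of_ne h1 h2]
    have hv1 : x.val ≠ m := fun h => h1 (Fin.ext (by simpa [av] using h))
    have hv2 : x.val ≠ m + 1 := fun h => h2 (Fin.ext (by simpa [bv] using h))
    simp [hv1, hv2]

lemma sw_mul_self (m : ℕ) : sw m * sw m = 1 := Equiv.swap_mul_self _ _

lemma sw_av (m : ℕ) : sw m (av m) = bv m := Equiv.swap_apply_left _ _
lemma sw_bv (m : ℕ) : sw m (bv m) = av m := Equiv.swap_apply_right _ _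

lemma dK_sw (m : ℕ) (π : Equiv.Perm (Fin (m+2))) (h : π.symm (av m) < π.symm (bv m)) :
    dK (sw m * π) = dK π + 1 := by
  have key : ∀ i j : Fin (m+2),
      (if i < j ∧ (sw m * π) j < (sw m * π) i then (1:ℕ) else 0)
      = (if i < j ∧ π j < π i then 1 else 0)
        + (if i = π.symm (av m) ∧ j = π.symm (bv m) then 1 else 0) := by
    intro i j
    by_cases hij : i < j
    · by_cases hcase : i = π.symm (av m) ∧ j = π.symm (bv m)
      · obtain ⟨rfl, rfl⟩ := hcase
        have g1 : (sw m * π) (π.symm (bv m)) < (sw m * π) (π.symm (av m)) := by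
          simp only [Equiv.Perm.mul_apply, Equiv.apply_symm_apply, sw_av, sw_bv]
          simp [Fin.lt_def, av, bv]
        have g2 : ¬ (π (π.symm (bv m)) < π (π.symm (av m))) := by
          rw [Equiv.apply_symm_apply, Equiv.apply_symm_apply]
          simp [Fin.lt_def, av, bv]
        rw [if_pos ⟨hij, g1⟩, if_neg (fun hc => g2 hc.2), if_pos ⟨rfl, rfl⟩]
      · rw [if_neg hcase, add_zero]
        refine if_congr (and_congr_right fun _ => ?_) rfl rfl
        simp only [Equiv.Perm.mul_apply, Fin.lt_def, sw_val]
        have hne : (π i).val ≠ (π j).val := by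
          intro hv
          have hij' := hij
          rw [π.injective (Fin.ext hv)] at hij'
          exact absurd hij' (lt_irrefl j)
        have hc1 : ¬((π i).val = m ∧ (π j).val = m + 1) := by
          intro ⟨ha, hb⟩
          exact hcase ⟨(Equiv.eq_symm_apply _).mpr (Fin.ext ha),
            (Equiv.eq_symm_apply _).mpr (Fin.ext hb)⟩
        have hc2 : ¬((π i).val = m + 1 ∧ (π j).val = m) := by
          intro ⟨ha, hb⟩
          have hi' : i = π.symm (bv m) := (Equiv.eq_symm_apply _).mpr (Fin.ext ha)
          have hj' : j = π.symm (av m) := (Equiv.eq_symm_apply _).mpr (Fin.ext hb)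
          rw [hi', hj'] at hij
          exact absurd (hij.trans h) (lt_irrefl _)
        have h1 := (π i).isLt
        have h2 := (π j).isLt
        split_ifs <;> omega
    · rw [if_neg (fun hc => hij hc.1), if_neg (fun hc => hij hc.1),
        if_neg (fun hc : _ ∧ _ => hij (by rw [hc.1, hc.2]; exact h)), add_zero]
  unfold dK
  rw [Finset.sum_congr rfl fun i _ => Finset.sum_congr rfl fun j _ => key i j]
  rw [Finset.sum_congr rfl fun i (_ : i ∈ Finset.univ) => Finset.sum_add_distrib,
    Finset.sum_add_distrib]
  congr 1
  simp [ite_and, Finset.sum_ite_eq']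

lemma symm_mul_sw_av (m : ℕ) (π : Equiv.Perm (Fin (m+2))) :
    (sw m * π).symm (av m) = π.symm (bv m) := by
  rw [Equiv.symm_apply_eq, Equiv.Perm.mul_apply, Equiv.apply_symm_apply, sw,
    Equiv.swap_apply_right]

lemma symm_mul_sw_bv (m : ℕ) (π : Equiv.Perm (Fin (m+2))) :
    (sw m * π).symm (bv m) = π.symm (av m) := by
  rw [Equiv.symm_apply_eq, Equiv.Perm.mul_apply, Equiv.apply_symm_apply, sw,
    Equiv.swap_apply_left]

lemma sumAc (m : ℕ) (q : ℝ) :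
    ∑ π ∈ Finset.univ.filter (fun π : Equiv.Perm (Fin (m+2)) =>
        (π.symm (av m)).val < m ∨ (π.symm (bv m)).val < m), q ^ dK π
    = (1+q) * ∑ π ∈ Finset.univ.filter (fun π : Equiv.Perm (Fin (m+2)) =>
        π.symm (av m) < π.symm (bv m) ∧ (π.symm (av m)).val < m), q ^ dK π := by
  classical
  have hne : ∀ π : Equiv.Perm (Fin (m+2)), (π.symm (av m)).val ≠ (π.symm (bv m)).val := by
    intro π hv
    have := π.symm.injective (Fin.ext hv)
    have := congrArg Fin.val this
    simp [av, bv] at this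
  have hsplit : Finset.univ.filter (fun π : Equiv.Perm (Fin (m+2)) =>
        (π.symm (av m)).val < m ∨ (π.symm (bv m)).val < m)
      = (Finset.univ.filter (fun π : Equiv.Perm (Fin (m+2)) =>
          π.symm (av m) < π.symm (bv m) ∧ (π.symm (av m)).val < m))
        ∪ (Finset.univ.filter (fun π : Equiv.Perm (Fin (m+2)) =>
          π.symm (bv m) < π.symm (av m) ∧ (π.symm (bv m)).val < m)) := by
    ext π
    simp only [Finset.mem_filter, Finset.mem_univ, true_and, Finset.mem_union, Fin.lt_def]
    have := hne π
    omega
  have hdisj : Disjoint (Finset.univ.filter (fun π : Equiv.Perm (Fin (m+2)) =>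
          π.symm (av m) < π.symm (bv m) ∧ (π.symm (av m)).val < m))
        (Finset.univ.filter (fun π : Equiv.Perm (Fin (m+2)) =>
          π.symm (bv m) < π.symm (av m) ∧ (π.symm (bv m)).val < m)) := by
    rw [Finset.disjoint_left]
    intro π h1 h2
    simp only [Finset.mem_filter, Finset.mem_univ, true_and, Fin.lt_def] at h1 h2
    omega
  rw [hsplit, Finset.sum_union hdisj]
  have hEp : ∑ π ∈ Finset.univ.filter (fun π : Equiv.Perm (Fin (m+2)) =>
          π.symm (bv m) < π.symm (av m) ∧ (π.symm (bv m)).val < m), q ^ dK π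
      = q * ∑ π ∈ Finset.univ.filter (fun π : Equiv.Perm (Fin (m+2)) =>
          π.symm (av m) < π.symm (bv m) ∧ (π.symm (av m)).val < m), q ^ dK π := by
    rw [Finset.mul_sum]
    refine Finset.sum_nbij' (fun π => sw m * π) (fun π => sw m * π) ?_ ?_ ?_ ?_ ?_
    · intro π hπ
      simp only [Finset.mem_filter, Finset.mem_univ, true_and] at hπ ⊢
      rw [symm_mul_sw_av, symm_mul_sw_bv]
      exact hπ
    · intro π hπ
      simp only [Finset.mem_filter, Finset.mem_univ, true_and] at hπ ⊢
      rw [symm_mul_sw_av, symm_mul_sw_bv]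
      exact hπ
    · intro π _
      show sw m * (sw m * π) = π
      rw [← mul_assoc, sw_mul_self, one_mul]
    · intro π _
      show sw m * (sw m * π) = π
      rw [← mul_assoc, sw_mul_self, one_mul]
    · intro π hπ
      simp only [Finset.mem_filter, Finset.mem_univ, true_and] at hπ
      have hlt : (sw m * π).symm (av m) < (sw m * π).symm (bv m) := by
        rw [symm_mul_sw_av, symm_mul_sw_bv]; exact hπ.1
      have hd := dK_sw m (sw m * π) hlt
      rw [← mul_assoc, sw_mul_self, one_mul] at hd
      rw [hd, pow_succ]
      ring
  rw [hEp]
  ring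

lemma psi_pos (m : ℕ) (q : ℝ) (hq0 : 0 < q) : 0 < psi m q := by
  rw [psi]
  refine Finset.prod_pos fun i _ => Finset.sum_pos (fun j _ => pow_pos hq0 j) ⟨0, by simp⟩


/-- Group 1 probability under the Mallows model: item n-1 (1-indexed) appears in
the top n-2 positions and is preferred there to item n (either item n appears after
it among the top n-2, or item n is absent from the top n-2). -/
theorem stmt13 (n : ℕ) (hn : 3 ≤ n) (q : ℝ) (hq0 : 0 < q) (hq1 : q < 1) :
    (∑ π : Equiv.Perm (Fin n),
        if (π.symm ⟨n - 2, by omega⟩).val < n - 2 ∧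
            (n - 2 ≤ (π.symm ⟨n - 1, by omega⟩).val ∨
              π.symm ⟨n - 2, by omega⟩ < π.symm ⟨n - 1, by omega⟩)
        then q ^ dK π / psi n q else 0)
      = (1 - (1 - q) * (1 - q ^ 2) / ((1 - q ^ (n - 1)) * (1 - q ^ n))) * (1 / (1 + q)) := by
  obtain ⟨m, rfl⟩ : ∃ m, n = m + 2 := ⟨n - 2, by omega⟩
  have hm : 1 ≤ m := by omega
  have hmk1 : ∀ (h : m + 2 - 2 < m + 2), (⟨m + 2 - 2, h⟩ : Fin (m+2)) = av m := fun _ => rfl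
  have hmk2 : ∀ (h : m + 2 - 1 < m + 2), (⟨m + 2 - 1, h⟩ : Fin (m+2)) = bv m := fun _ => rfl
  have hmk1' : ∀ (h : m < m + 2), (⟨m, h⟩ : Fin (m+2)) = av m := fun _ => rfl
  have hmk2' : ∀ (h : m + 1 < m + 2), (⟨m + 1, h⟩ : Fin (m+2)) = bv m := fun _ => rfl
  simp only [hmk1, hmk2, show m + 2 - 2 = m from rfl, show m + 2 - 1 = m + 1 from rfl,
    hmk1', hmk2']
  have hiff : ∀ π : Equiv.Perm (Fin (m+2)),
      ((π.symm (av m)).val < m ∧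
        (m ≤ (π.symm (bv m)).val ∨ π.symm (av m) < π.symm (bv m)))
      ↔ (π.symm (av m) < π.symm (bv m) ∧ (π.symm (av m)).val < m) := by
    intro π
    rw [Fin.lt_def]
    omega
  rw [Finset.sum_congr rfl (fun π _ => if_congr (hiff π) rfl rfl), ← Finset.sum_filter,
    ← Finset.sum_div]
  -- key equations
  have htot := sum_q_dK q (m+2)
  have hA := sumA m q
  have hAc := sumAc m q
  have hsplit := Finset.sum_filter_add_sum_filter_not Finset.univ
    (fun π : Equiv.Perm (Fin (m+2)) => m ≤ (π.symm (av m)).val ∧ m ≤ (π.symm (bv m)).val)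
    (fun π => q ^ dK π)
  have hfneg : Finset.univ.filter (fun π : Equiv.Perm (Fin (m+2)) =>
        ¬(m ≤ (π.symm (av m)).val ∧ m ≤ (π.symm (bv m)).val))
      = Finset.univ.filter (fun π : Equiv.Perm (Fin (m+2)) =>
        (π.symm (av m)).val < m ∨ (π.symm (bv m)).val < m) := by
    refine Finset.filter_congr fun π _ => ?_
    constructor <;> intro h' <;> omega
  rw [hfneg, hA, hAc, htot] at hsplit
  set S := ∑ π ∈ Finset.univ.filter (fun π : Equiv.Perm (Fin (m+2)) =>
      π.symm (av m) < π.symm (bv m) ∧ (π.symm (av m)).val < m), q ^ dK π with hSdef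
  -- algebra
  have h1q : (0:ℝ) < 1 + q := by linarith
  have hq1' : q ≠ 1 := ne_of_lt hq1
  have hgeom : ∀ k : ℕ, (∑ j ∈ Finset.range k, q ^ j) = (1 - q ^ k)/(1 - q) := by
    intro k
    rw [geom_sum_eq hq1']
    rw [div_eq_div_iff (by intro h; apply hq1'; linarith) (by intro h; apply hq1'; linarith)]
    ring
  have hpsplit : psi (m+2) q = psi m q * ((1 - q ^ (m+1))/(1-q)) * ((1 - q ^ (m+2))/(1-q)) := by
    rw [psi, Finset.prod_range_succ, Finset.prod_range_succ, ← psi, hgeom, hgeom]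
  have hp1 : q ^ (m+1) < 1 := pow_lt_one₀ (le_of_lt hq0) hq1 (by omega)
  have hp2 : q ^ (m+2) < 1 := pow_lt_one₀ (le_of_lt hq0) hq1 (by omega)
  have hpm := psi_pos m q hq0
  have hS : S = (psi (m+2) q - psi m q * (1+q))/(1+q) := by
    rw [eq_div_iff (ne_of_gt h1q)]
    linear_combination hsplit
  rw [hS, hpsplit]
  have d1 : (1:ℝ) - q ≠ 0 := by intro h; apply hq1'; linarith
  have d2 : (1:ℝ) - q ^ (m+1) ≠ 0 := by intro h; linarith
  have d3 : (1:ℝ) - q ^ (m+2) ≠ 0 := by intro h; linarith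
  have d4 : (1:ℝ) + q ≠ 0 := ne_of_gt h1q
  have d5 : psi m q ≠ 0 := ne_of_gt hpm
  field_simp
  ring
end

section
/- Let S = {x_1 < x_2 < ... < x_M} ⊆ [n] and consider the RMJ-based ranking model with identity central ranking and dispersion q ∈ (0,1). For a top-k list π_k = π_{k-1} ⊕ z with z ∉ S and R(π_{k-1}) ∩ S = ∅, the conditional probability of choosing x_i from S given that the participant's top-k list is π_k equals q^{M - p(z|S) + i - 1}/(1+q+...+q^{M-1}) if z > x_i, and q^{i - p(z|S) - 1}/(1+q+...+q^{M-1}) if z < x_i, where p(z|S) = |{x ∈ S : x < z}|. -/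
open Finset

section Infra
variable {α : Type*} [LinearOrder α]

def geo (q : ℝ) (m : ℕ) : ℝ := ∑ j ∈ Finset.range m, q ^ j

def qfac (q : ℝ) (m : ℕ) : ℝ := ∏ t ∈ Finset.range m, geo q (t + 1)

lemma geo_pos {q : ℝ} (hq : 0 < q) {m : ℕ} (hm : 0 < m) : 0 < geo q m := by
  unfold geo
  apply Finset.sum_pos (fun j _ => pow_pos hq j)
  exact Finset.nonempty_range_iff.mpr (by omega)

lemma qfac_pos {q : ℝ} (hq : 0 < q) (m : ℕ) : 0 < qfac q m :=
  Finset.prod_pos fun t _ => geo_pos hq (Nat.succ_pos t)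

lemma geo_add (q : ℝ) (a b : ℕ) : geo q (a + b) = geo q a + q ^ a * geo q b := by
  unfold geo
  rw [Finset.sum_range_add, Finset.mul_sum]
  congr 1
  exact Finset.sum_congr rfl fun j _ => by rw [pow_add]

lemma qfac_succ (q : ℝ) (m : ℕ) : qfac q (m + 1) = qfac q m * geo q (m + 1) :=
  Finset.prod_range_succ _ _

/-- rank of `t` in `A`: number of elements of `A` strictly below `t`. -/
def rk (A : Finset α) (t : α) : ℕ := (A.filter (· < t)).card

lemma rk_le_card (A : Finset α) (t : α) : rk A t ≤ A.card := Finset.card_filter_le _ _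

lemma rk_mono (A : Finset α) {t t' : α} (h : t ≤ t') : rk A t ≤ rk A t' := by
  apply Finset.card_le_card
  intro y hy
  simp only [Finset.mem_filter] at *
  exact ⟨hy.1, lt_of_lt_of_le hy.2 h⟩

lemma rk_erase (A : Finset α) {c b : α} (h : ¬ c < b) : rk (A.erase c) b = rk A b := by
  unfold rk
  congr 1
  ext y
  simp only [Finset.mem_filter, Finset.mem_erase]
  constructor
  · rintro ⟨⟨_, h1⟩, h2⟩; exact ⟨h1, h2⟩
  · rintro ⟨h1, h2⟩; exact ⟨⟨fun he => h (he ▸ h2), h1⟩, h2⟩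

lemma rk_lt (A : Finset α) {a t : α} (ha : a ∈ A) (h : a < t) : rk A a < rk A t := by
  apply Finset.card_lt_card
  constructor
  · intro y hy
    simp only [Finset.mem_filter] at *
    exact ⟨hy.1, lt_trans hy.2 h⟩
  · intro hsub
    have := hsub (Finset.mem_filter.mpr ⟨ha, h⟩)
    simp only [Finset.mem_filter] at this
    exact absurd this.2 (lt_irrefl a)

lemma lt_iff_rk (A : Finset α) {a z : α} (ha : a ∈ A) : a < z ↔ rk A a < rk A z := by
  constructor
  · exact rk_lt A ha
  · intro h
    by_contra hc
    exact absurd (rk_mono A (not_lt.mp hc)) (by omega)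

lemma lt_iff_rk' (A : Finset α) {a x : α} (ha : a ∈ A) (hx : x ∉ A) :
    x < a ↔ rk A x ≤ rk A a := by
  constructor
  · intro h; exact rk_mono A h.le
  · intro h
    rcases lt_trichotomy x a with h' | rfl | h'
    · exact h'
    · exact absurd ha hx
    · exact absurd (rk_lt A ha h') (by omega)

lemma rk_split {S T : Finset α} (h : S ⊆ T) (t : α) :
    rk T t = rk S t + rk (T \ S) t := by
  unfold rk
  rw [← Finset.card_union_of_disjoint
    (Finset.disjoint_filter_filter Finset.disjoint_sdiff),
    ← Finset.filter_union, Finset.union_sdiff_of_subset h]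

lemma sum_rank (g : ℕ → ℝ) (A : Finset α) :
    ∑ a ∈ A, g (rk A a) = ∑ j ∈ Finset.range A.card, g j := by
  induction A using Finset.strongInduction with
  | _ A ih =>
    rcases A.eq_empty_or_nonempty with rfl | hA
    · simp
    · set a := A.max' hA with ha
      have hmem : a ∈ A := A.max'_mem hA
      have hcard : 1 ≤ A.card := Finset.card_pos.mpr hA
      have hflt : A.filter (· < a) = A.erase a := by
        ext y
        simp only [Finset.mem_filter, Finset.mem_erase]
        constructor
        · rintro ⟨hy, hlt⟩; exact ⟨ne_of_lt hlt, hy⟩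
        · rintro ⟨hne, hy⟩; exact ⟨hy, lt_of_le_of_ne (A.le_max' y hy) hne⟩
      have h1 : rk A a = A.card - 1 := by
        rw [rk, hflt, Finset.card_erase_of_mem hmem]
      rw [← Finset.add_sum_erase _ _ hmem]
      have h2 : ∀ b ∈ A.erase a, g (rk A b) = g (rk (A.erase a) b) := by
        intro b hb
        rw [rk_erase]
        intro hc
        exact absurd (A.le_max' b (Finset.mem_of_mem_erase hb)) (not_le.mpr hc)
      rw [Finset.sum_congr rfl h2, ih (A.erase a) (Finset.erase_ssubset hmem),
        Finset.card_erase_of_mem hmem, h1]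
      rw [show A.card = (A.card - 1) + 1 by omega, Finset.sum_range_succ]
      rw [show A.card - 1 + 1 - 1 = A.card - 1 by omega]
      ring



lemma A1 (q : ℝ) (P c : ℕ) :
    ∑ j ∈ Finset.range (P + c), q ^ ((if j < P then P + c else 0) + j)
      = q ^ P * geo q (P + c) := by
  rw [Finset.sum_range_add]
  have h1 : ∀ j ∈ Finset.range P, q ^ ((if j < P then P + c else 0) + j)
      = q ^ (P + c) * q ^ j := by
    intro j hj
    rw [if_pos (Finset.mem_range.mp hj), pow_add]
  have h2 : ∀ j ∈ Finset.range c, q ^ ((if P + j < P then P + c else 0) + (P + j))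
      = q ^ P * q ^ j := by
    intro j hj
    rw [if_neg (by omega), show 0 + (P + j) = P + j by omega, pow_add]
  rw [Finset.sum_congr rfl h1, Finset.sum_congr rfl h2, ← Finset.mul_sum, ← Finset.mul_sum]
  show q ^ (P + c) * geo q P + q ^ P * geo q c = _
  rw [show P + c = c + P by omega, geo_add]
  ring

lemma C1' (q : ℝ) (M b c v r : ℕ) :
    q ^ (M + (v + b + c) + (r + v)) * geo q M +
      ∑ j ∈ Finset.range (v + b + c),
        q ^ ((if j < v + b then M + (v + b + c) else 0) + (if v ≤ j then M else 0) + (r + j))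
      = q ^ (M + (r + (v + b))) * geo q (M + (v + b + c)) := by
  rw [show v + b + c = v + (b + c) by omega, Finset.sum_range_add, Finset.sum_range_add]
  have h1 : ∀ j ∈ Finset.range v,
      q ^ ((if j < v + b then M + (v + (b + c)) else 0) + (if v ≤ j then M else 0) + (r + j))
      = q ^ (M + (v + (b + c)) + r) * q ^ j := by
    intro j hj
    have hj' := Finset.mem_range.mp hj
    rw [if_pos (by omega), if_neg (by omega), ← pow_add]
    congr 1
    omega
  have h2 : ∀ j ∈ Finset.range b,
      q ^ ((if v + j < v + b then M + (v + (b + c)) else 0) + (if v ≤ v + j then M else 0) + (r + (v + j)))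
      = q ^ (M + (v + (b + c)) + M + r + v) * q ^ j := by
    intro j hj
    have hj' := Finset.mem_range.mp hj
    rw [if_pos (by omega), if_pos (by omega), ← pow_add]
    congr 1
    omega
  have h3 : ∀ j ∈ Finset.range c,
      q ^ ((if v + (b + j) < v + b then M + (v + (b + c)) else 0) + (if v ≤ v + (b + j) then M else 0) + (r + (v + (b + j))))
      = q ^ (M + r + v + b) * q ^ j := by
    intro j hj
    have hj' := Finset.mem_range.mp hj
    rw [if_neg (by omega), if_pos (by omega), ← pow_add]
    congr 1
    omega
  rw [Finset.sum_congr rfl h1, Finset.sum_congr rfl h2, Finset.sum_congr rfl h3,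
    ← Finset.mul_sum, ← Finset.mul_sum, ← Finset.mul_sum]
  show q ^ (M + (v + (b + c)) + (r + v)) * geo q M +
      (q ^ (M + (v + (b + c)) + r) * geo q v +
        (q ^ (M + (v + (b + c)) + M + r + v) * geo q b + q ^ (M + r + v + b) * geo q c))
      = q ^ (M + (r + (v + b))) * geo q (M + (v + (b + c)))
  rw [show M + (v + (b + c)) = c + (v + (M + b)) by omega, geo_add, geo_add, geo_add]
  ring

lemma C2' (q : ℝ) (M b c u r : ℕ) :
    q ^ (0 + (r + (u + b))) * geo q M +
      ∑ j ∈ Finset.range (u + b + c),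
        q ^ ((if j < u then M + (u + b + c) else 0) + (if u + b ≤ j then M else 0) + (r + j))
      = q ^ (r + u) * geo q (M + (u + b + c)) := by
  rw [show u + b + c = u + (b + c) by omega, Finset.sum_range_add, Finset.sum_range_add]
  have h1 : ∀ j ∈ Finset.range u,
      q ^ ((if j < u then M + (u + (b + c)) else 0) + (if u + b ≤ j then M else 0) + (r + j))
      = q ^ (M + (u + (b + c)) + r) * q ^ j := by
    intro j hj
    have hj' := Finset.mem_range.mp hj
    rw [if_pos (by omega), if_neg (by omega), ← pow_add]
    congr 1
    omega
  have h2 : ∀ j ∈ Finset.range b,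
      q ^ ((if u + j < u then M + (u + (b + c)) else 0) + (if u + b ≤ u + j then M else 0) + (r + (u + j)))
      = q ^ (r + u) * q ^ j := by
    intro j hj
    have hj' := Finset.mem_range.mp hj
    rw [if_neg (by omega), if_neg (by omega), ← pow_add]
    congr 1
    omega
  have h3 : ∀ j ∈ Finset.range c,
      q ^ ((if u + (b + j) < u then M + (u + (b + c)) else 0) + (if u + b ≤ u + (b + j) then M else 0) + (r + (u + (b + j))))
      = q ^ (M + r + u + b) * q ^ j := by
    intro j hj
    have hj' := Finset.mem_range.mp hj
    rw [if_neg (by omega), if_pos (by omega), ← pow_add]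
    congr 1
    omega
  rw [Finset.sum_congr rfl h1, Finset.sum_congr rfl h2, Finset.sum_congr rfl h3,
    ← Finset.mul_sum, ← Finset.mul_sum, ← Finset.mul_sum]
  show q ^ (0 + (r + (u + b))) * geo q M +
      (q ^ (M + (u + (b + c)) + r) * geo q u +
        (q ^ (r + u) * geo q b + q ^ (M + r + u + b) * geo q c))
      = q ^ (r + u) * geo q (M + (u + (b + c)))
  rw [show M + (u + (b + c)) = b + (M + (c + u)) by omega, geo_add, geo_add, geo_add]
  ring

section Lists
variable {α : Type*} [LinearOrder α]

/-- the finset of all orderings (lists) of the elements of `T`. -/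
def PT (T : Finset α) : Finset (List α) := (T.sort (· ≤ ·)).permutations.toFinset

lemma mem_PT {T : Finset α} {l : List α} : l ∈ PT T ↔ l.Perm (T.sort (· ≤ ·)) := by
  simp [PT, List.mem_toFinset, List.mem_permutations]

lemma PT_empty : PT (∅ : Finset α) = {[]} := by
  ext l
  simp [mem_PT]

lemma length_of_mem_PT {T : Finset α} {l : List α} (hl : l ∈ PT T) : l.length = T.card :=
  ((mem_PT.mp hl).length_eq).trans (Finset.length_sort _)

lemma nodup_of_mem_PT {T : Finset α} {l : List α} (hl : l ∈ PT T) : l.Nodup :=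
  ((mem_PT.mp hl).nodup_iff).mpr (T.sort_nodup _)

lemma mem_of_mem_PT {T : Finset α} {l : List α} (hl : l ∈ PT T) {b : α} :
    b ∈ l ↔ b ∈ T := by
  rw [(mem_PT.mp hl).mem_iff, Finset.mem_sort]

lemma sort_erase_perm (T : Finset α) (a : α) :
    ((T.sort (· ≤ ·)).erase a).Perm ((T.erase a).sort (· ≤ ·)) := by
  have h1 : ((T.sort (· ≤ ·)).erase a).Perm (T.toList.erase a) :=
    (Finset.sort_perm_toList _ _).erase a
  have h2 : ((T.erase a).sort (· ≤ ·)).Perm ((T.erase a).toList) :=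
    Finset.sort_perm_toList _ _
  refine h1.trans (List.Perm.trans ?_ h2.symm)
  have : ((T.toList.erase a : List α) : Multiset α) = ((T.erase a).toList : Multiset α) := by
    rw [← Multiset.coe_erase, Finset.coe_toList, Finset.coe_toList, Finset.erase_val]
  exact Multiset.coe_eq_coe.mp this

lemma cons_mem_PT {T : Finset α} {a : α} {l : List α} :
    a :: l ∈ PT T ↔ a ∈ T ∧ l ∈ PT (T.erase a) := by
  rw [mem_PT, List.cons_perm_iff_perm_erase, mem_PT]
  constructor
  · rintro ⟨h1, h2⟩
    exact ⟨(Finset.mem_sort _).mp h1, h2.trans (sort_erase_perm T a)⟩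
  · rintro ⟨h1, h2⟩
    exact ⟨(Finset.mem_sort _).mpr h1, h2.trans (sort_erase_perm T a).symm⟩

lemma PT_decomp (T : Finset α) (hT : T.Nonempty) (F : List α → ℝ) :
    ∑ l ∈ PT T, F l = ∑ a ∈ T, ∑ l ∈ PT (T.erase a), F (a :: l) := by
  have hPT : PT T = T.biUnion (fun a => (PT (T.erase a)).image (List.cons a)) := by
    ext l
    simp only [Finset.mem_biUnion, Finset.mem_image]
    constructor
    · intro hl
      cases l with
      | nil =>
        exfalso
        have h1 := length_of_mem_PT hl
        have h2 := Finset.card_pos.mpr hT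
        simp at h1
        omega
      | cons a l =>
        have h := cons_mem_PT.mp hl
        exact ⟨a, h.1, l, h.2, rfl⟩
    · rintro ⟨a, ha, l', hl', rfl⟩
      exact cons_mem_PT.mpr ⟨ha, hl'⟩
  rw [hPT, Finset.sum_biUnion]
  · refine Finset.sum_congr rfl fun a _ => ?_
    refine Finset.sum_image fun x _ y _ h => ?_
    simpa using h
  · intro a _ b _ hab
    simp only [Function.onFun]
    rw [Finset.disjoint_left]
    rintro l hla hlb
    simp only [Finset.mem_coe, Finset.mem_image] at hla hlb
    obtain ⟨la, _, rfl⟩ := hla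
    obtain ⟨lb, _, hlb'⟩ := hlb
    have := (List.cons.injEq _ _ _ _).mp hlb'.symm
    exact hab this.1

/-- multiplicative weight of the word `z :: l`. -/
def wt (q : ℝ) : α → List α → ℝ
  | _, [] => 1
  | z, a :: l => (if a < z then q ^ (l.length + 1) else 1) * wt q a l

/-- additive weight (reverse-major-index style) of the word `z :: l`. -/
def Wt : α → List α → ℕ
  | _, [] => 0
  | z, a :: l => (if a < z then l.length + 1 else 0) + Wt a l

lemma wt_pow (q : ℝ) : ∀ (z : α) (l : List α), wt q z l = q ^ Wt z l
  | _, [] => by simp [wt, Wt]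
  | z, a :: l => by
    rw [wt, Wt, wt_pow q a l, pow_add]
    split_ifs <;> simp [pow_succ] <;> ring

lemma Wt_eq (d : α) : ∀ (z : α) (l : List α),
    Wt z l = ∑ j ∈ Finset.range l.length,
      if l.getD j d < (z :: l).getD j d then l.length - j else 0
  | _, [] => by simp [Wt]
  | z, a :: l => by
    rw [Wt, Wt_eq d a l]
    rw [List.length_cons, Finset.sum_range_succ']
    have h1 : ∀ j ∈ Finset.range l.length,
        (if (a :: l).getD (j + 1) d < (z :: a :: l).getD (j + 1) d then l.length + 1 - (j + 1) else 0)
        = (if l.getD j d < (a :: l).getD j d then l.length - j else 0) := by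
      intro j hj
      rw [List.getD_cons_succ, List.getD_cons_succ]
      congr 1
      omega
    rw [Finset.sum_congr rfl h1]
    simp [List.getD_cons_zero]
    split_ifs <;> [ring; ring]

/-- Claim A: the total weighted sum over orderings of `T`. -/
lemma dsum_eq (q : ℝ) : ∀ (N : ℕ) (T : Finset α), T.card ≤ N → ∀ z : α,
    ∑ l ∈ PT T, wt q z l = q ^ rk T z * qfac q T.card := by
  intro N
  induction N with
  | zero =>
    intro T hT z
    have : T = ∅ := Finset.card_eq_zero.mp (by omega)
    subst this
    simp [PT_empty, wt, rk, qfac]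
  | succ N ih =>
    intro T hT z
    rcases T.eq_empty_or_nonempty with rfl | hne
    · simp [PT_empty, wt, rk, qfac]
    · have hm : 1 ≤ T.card := Finset.card_pos.mpr hne
      rw [PT_decomp T hne]
      have step : ∀ a ∈ T, ∑ l ∈ PT (T.erase a), wt q z (a :: l)
          = q ^ ((if a < z then T.card else 0) + rk T a) * qfac q (T.card - 1) := by
        intro a ha
        have hstep : ∀ l ∈ PT (T.erase a), wt q z (a :: l)
            = (if a < z then q ^ T.card else 1) * wt q a l := by
          intro l hl
          have hlen : l.length = T.card - 1 := by
            rw [length_of_mem_PT hl, Finset.card_erase_of_mem ha]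
          show (if a < z then q ^ (l.length + 1) else 1) * wt q a l = _
          rw [hlen, show T.card - 1 + 1 = T.card by omega]
        rw [Finset.sum_congr rfl hstep, ← Finset.mul_sum,
          ih (T.erase a) (by rw [Finset.card_erase_of_mem ha]; omega) a,
          rk_erase T (lt_irrefl a), Finset.card_erase_of_mem ha]
        split_ifs
        · rw [pow_add]; ring
        · rw [Nat.zero_add]; ring
      rw [Finset.sum_congr rfl step, ← Finset.sum_mul]
      have key : ∑ a ∈ T, q ^ ((if a < z then T.card else 0) + rk T a)
          = q ^ rk T z * geo q T.card := by
        have hconv : ∀ a ∈ T, q ^ ((if a < z then T.card else 0) + rk T a)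
            = (fun j => q ^ ((if j < rk T z then T.card else 0) + j)) (rk T a) := by
          intro a ha
          simp only
          rw [if_congr (lt_iff_rk T ha) rfl rfl]
        rw [Finset.sum_congr rfl hconv,
          sum_rank (fun j => q ^ ((if j < rk T z then T.card else 0) + j)) T]
        obtain ⟨c, hc⟩ : ∃ c, T.card = rk T z + c := ⟨T.card - rk T z, by
          have := rk_le_card T z
          omega⟩
        rw [hc]
        exact A1 q (rk T z) c
      rw [key]
      rw [show T.card = (T.card - 1) + 1 by omega, qfac_succ,
        show T.card - 1 + 1 = T.card by omega]
      ring

/-- exponent in the conditional choice probability -/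
def cexp (S : Finset α) (z x : α) : ℕ :=
  if x < z then S.card - rk S z + rk S x else rk S x - rk S z

/-- `x` is the first element of `S` appearing in `l`. -/
def fstS (S : Finset α) (x : α) (l : List α) : Prop :=
  (l.filter (fun a => a ∈ S)).head? = some x

instance (S : Finset α) (x : α) : DecidablePred (fstS S x) := fun l => by
  unfold fstS; infer_instance

lemma fstS_cons_mem {S : Finset α} {x a : α} {l : List α} (ha : a ∈ S) :
    fstS S x (a :: l) ↔ a = x := by
  unfold fstS
  rw [List.filter_cons, if_pos (by simpa using ha)]
  simp

lemma fstS_cons_notmem {S : Finset α} {x a : α} {l : List α} (ha : a ∉ S) :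
    fstS S x (a :: l) ↔ fstS S x l := by
  unfold fstS
  rw [List.filter_cons, if_neg (by simpa using ha)]

/-- Claim B -/
lemma nsum_eq (q : ℝ) (hq : 0 < q) : ∀ (N : ℕ) (T S : Finset α) (z x : α),
    T.card ≤ N → S ⊆ T → x ∈ S → z ∉ T →
    (∑ l ∈ PT T, if fstS S x l then wt q z l else 0) * geo q S.card
      = q ^ (cexp S z x + rk T z) * qfac q T.card := by
  intro N
  induction N with
  | zero =>
    intro T S z x hN hST hx hz
    have hT : T = ∅ := Finset.card_eq_zero.mp (by omega)
    subst hT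
    exact absurd (hST hx) (by simp)
  | succ N ih =>
    intro T S z x hN hST hx hz
    have hxT : x ∈ T := hST hx
    have hne : T.Nonempty := ⟨x, hxT⟩
    have hm : 1 ≤ T.card := Finset.card_pos.mpr hne
    have hM1 : 1 ≤ S.card := Finset.card_pos.mpr ⟨x, hx⟩
    have hKM : T.card = S.card + (T \ S).card := by
      rw [Finset.card_sdiff_of_subset hST]
      have := Finset.card_le_card hST
      omega
    have hzUS : z ∉ T \ S := fun h => hz (Finset.mem_sdiff.mp h).1
    have hxUS : x ∉ T \ S := fun h => (Finset.mem_sdiff.mp h).2 hx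
    -- the inner sum at a = x
    have inner_x : (∑ l ∈ PT (T.erase x), if fstS S x (x :: l) then wt q z (x :: l) else 0)
        = q ^ ((if x < z then T.card else 0) + rk T x) * qfac q (T.card - 1) := by
      have h1 : ∀ l ∈ PT (T.erase x), (if fstS S x (x :: l) then wt q z (x :: l) else 0)
          = (if x < z then q ^ T.card else 1) * wt q x l := by
        intro l hl
        rw [if_pos ((fstS_cons_mem hx).mpr rfl)]
        have hlen : l.length = T.card - 1 := by
          rw [length_of_mem_PT hl, Finset.card_erase_of_mem hxT]
        show (if x < z then q ^ (l.length + 1) else 1) * wt q x l = _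
        rw [hlen, show T.card - 1 + 1 = T.card by omega]
      rw [Finset.sum_congr rfl h1, ← Finset.mul_sum,
        dsum_eq q (T.erase x).card (T.erase x) le_rfl x,
        rk_erase T (lt_irrefl x), Finset.card_erase_of_mem hxT]
      split_ifs
      · rw [pow_add]; ring
      · rw [Nat.zero_add]; ring
    -- the inner sums at a ∈ S, a ≠ x vanish
    have hzero : ∀ b ∈ S, b ≠ x →
        (∑ l ∈ PT (T.erase b), if fstS S x (b :: l) then wt q z (b :: l) else 0) = 0 := by
      intro b hb hbx
      refine Finset.sum_eq_zero fun l hl => ?_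
      rw [if_neg (fun h => hbx ((fstS_cons_mem hb).mp h))]
    -- the inner sums at a ∈ T \ S, multiplied by geo
    have hsd : ∀ a ∈ T \ S,
        (∑ l ∈ PT (T.erase a), if fstS S x (a :: l) then wt q z (a :: l) else 0) * geo q S.card
        = q ^ ((if a < z then T.card else 0) + (cexp S a x + rk T a)) * qfac q (T.card - 1) := by
      intro a ha
      obtain ⟨haT, haS⟩ := Finset.mem_sdiff.mp ha
      have h1 : ∀ l ∈ PT (T.erase a), (if fstS S x (a :: l) then wt q z (a :: l) else 0)
          = (if a < z then q ^ T.card else 1) * (if fstS S x l then wt q a l else 0) := by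
        intro l hl
        have hlen : l.length = T.card - 1 := by
          rw [length_of_mem_PT hl, Finset.card_erase_of_mem haT]
        by_cases hf : fstS S x l
        · rw [if_pos ((fstS_cons_notmem haS).mpr hf), if_pos hf]
          show (if a < z then q ^ (l.length + 1) else 1) * wt q a l = _
          rw [hlen, show T.card - 1 + 1 = T.card by omega]
        · rw [if_neg (fun h => hf ((fstS_cons_notmem haS).mp h)), if_neg hf, mul_zero]
      rw [Finset.sum_congr rfl h1, ← Finset.mul_sum, mul_assoc,
        ih (T.erase a) S a x
          (by rw [Finset.card_erase_of_mem haT]; omega)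
          (Finset.subset_erase.mpr ⟨hST, haS⟩) hx (Finset.notMem_erase a T),
        rk_erase T (lt_irrefl a), Finset.card_erase_of_mem haT]
      split_ifs
      · rw [pow_add, pow_add]; ring
      · rw [Nat.zero_add, one_mul]
    -- scalar identity
    have hconv : ∀ a ∈ T \ S, q ^ ((if a < z then T.card else 0) + (cexp S a x + rk T a))
        = (fun j => q ^ ((if j < rk (T \ S) z then T.card else 0) +
            (if rk (T \ S) x ≤ j then S.card else 0) + (rk S x + j))) (rk (T \ S) a) := by
      intro a ha
      obtain ⟨haT, haS⟩ := Finset.mem_sdiff.mp ha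
      have hra : rk T a = rk S a + rk (T \ S) a := rk_split hST a
      have hiff1 : a < z ↔ rk (T \ S) a < rk (T \ S) z := lt_iff_rk _ ha
      have hiff2 : x < a ↔ rk (T \ S) x ≤ rk (T \ S) a := lt_iff_rk' _ ha hxUS
      have hax : a ≠ x := fun h => haS (h ▸ hx)
      have hSa : rk S a ≤ S.card := rk_le_card S a
      show q ^ _ = q ^ _
      congr 1
      simp only [cexp]
      by_cases h1 : a < z <;> by_cases h2 : x < a
      · rw [if_pos h1, if_pos (hiff1.mp h1), if_pos h2, if_pos (hiff2.mp h2)]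
        omega
      · have hax2 : a < x := lt_of_le_of_ne (not_lt.mp h2) hax
        have hle : rk S a ≤ rk S x := rk_mono S hax2.le
        rw [if_pos h1, if_pos (hiff1.mp h1), if_neg h2,
          if_neg (fun hh => h2 (hiff2.mpr hh))]
        omega
      · rw [if_neg h1, if_neg (fun hh => h1 (hiff1.mpr hh)), if_pos h2,
          if_pos (hiff2.mp h2)]
        omega
      · have hax2 : a < x := lt_of_le_of_ne (not_lt.mp h2) hax
        have hle : rk S a ≤ rk S x := rk_mono S hax2.le
        rw [if_neg h1, if_neg (fun hh => h1 (hiff1.mpr hh)), if_neg h2,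
          if_neg (fun hh => h2 (hiff2.mpr hh))]
        omega
    have hsum2 : ∑ a ∈ T \ S, q ^ ((if a < z then T.card else 0) + (cexp S a x + rk T a))
        = ∑ j ∈ Finset.range ((T \ S).card),
            q ^ ((if j < rk (T \ S) z then T.card else 0) +
              (if rk (T \ S) x ≤ j then S.card else 0) + (rk S x + j)) := by
      rw [Finset.sum_congr rfl hconv,
        sum_rank (fun j => q ^ ((if j < rk (T \ S) z then T.card else 0) +
          (if rk (T \ S) x ≤ j then S.card else 0) + (rk S x + j))) (T \ S)]
    have hstar : (∑ a ∈ T \ S, q ^ ((if a < z then T.card else 0) + (cexp S a x + rk T a)))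
        + q ^ ((if x < z then T.card else 0) + rk T x) * geo q S.card
        = q ^ (cexp S z x + rk T z) * geo q T.card := by
      rw [hsum2, rk_split hST x, rk_split hST z]
      have huK : rk (T \ S) z ≤ (T \ S).card := rk_le_card _ z
      have hvK : rk (T \ S) x ≤ (T \ S).card := rk_le_card _ x
      have hpM : rk S z ≤ S.card := rk_le_card S z
      by_cases hxz : x < z
      · have hvu : rk (T \ S) x ≤ rk (T \ S) z := rk_mono _ hxz.le
        obtain ⟨b, hb⟩ : ∃ b, rk (T \ S) z = rk (T \ S) x + b :=
          ⟨rk (T \ S) z - rk (T \ S) x, by omega⟩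
        obtain ⟨c, hc⟩ : ∃ c, (T \ S).card = rk (T \ S) x + b + c :=
          ⟨(T \ S).card - (rk (T \ S) x + b), by omega⟩
        simp only [cexp, if_pos hxz]
        rw [show S.card - rk S z + rk S x + (rk S z + rk (T \ S) z)
            = S.card + (rk S x + (rk (T \ S) x + b)) by omega]
        rw [show rk (T \ S) z = rk (T \ S) x + b from hb]
        rw [show (T \ S).card = rk (T \ S) x + b + c from hc]
        rw [show T.card = S.card + (rk (T \ S) x + b + c) by omega]
        linear_combination C1' q S.card b c (rk (T \ S) x) (rk S x)
      · have hzx : z < x := lt_of_le_of_ne (not_lt.mp hxz) (fun h => hz (h ▸ hxT))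
        have huv : rk (T \ S) z ≤ rk (T \ S) x := rk_mono _ hzx.le
        have hpr : rk S z ≤ rk S x := rk_mono S hzx.le
        obtain ⟨b, hb⟩ : ∃ b, rk (T \ S) x = rk (T \ S) z + b :=
          ⟨rk (T \ S) x - rk (T \ S) z, by omega⟩
        obtain ⟨c, hc⟩ : ∃ c, (T \ S).card = rk (T \ S) z + b + c :=
          ⟨(T \ S).card - (rk (T \ S) z + b), by omega⟩
        simp only [cexp, if_neg hxz]
        rw [show rk S x - rk S z + (rk S z + rk (T \ S) z) = rk S x + rk (T \ S) z by omega]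
        rw [show rk S x + rk (T \ S) x = rk S x + (rk (T \ S) z + b) by omega]
        rw [show rk (T \ S) x = rk (T \ S) z + b from hb]
        rw [show (T \ S).card = rk (T \ S) z + b + c from hc]
        rw [show T.card = S.card + (rk (T \ S) z + b + c) by omega]
        rw [show (0:ℕ) + (rk S x + (rk (T \ S) z + b)) = 0 + (rk S x + (rk (T \ S) z + b)) from rfl]
        linear_combination C2' q S.card b c (rk (T \ S) z) (rk S x)
    -- assemble
    have hq' : qfac q T.card = qfac q (T.card - 1) * geo q T.card := by
      obtain ⟨m', hm'⟩ : ∃ m', T.card = m' + 1 := ⟨T.card - 1, by omega⟩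
      rw [hm', qfac_succ, show m' + 1 - 1 = m' by omega]
    rw [PT_decomp T hne, ← Finset.sum_sdiff hST,
      Finset.sum_eq_single_of_mem x hx hzero, add_mul, Finset.sum_mul,
      Finset.sum_congr rfl hsd, inner_x, ← Finset.sum_mul, hq']
    linear_combination (qfac q (T.card - 1)) * hstar

lemma fstS_ofFn (m : ℕ) : ∀ (u : Fin m → α) (S : Finset α) (x : α),
    (fstS S x (List.ofFn u) ↔
      ∃ jx : Fin m, u jx = x ∧ x ∈ S ∧ ∀ j : Fin m, j < jx → u j ∉ S) := by
  induction m with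
  | zero =>
    intro u S x
    constructor
    · intro h; exact absurd h (by simp [fstS])
    · rintro ⟨jx, -⟩; exact jx.elim0
  | succ m ihm =>
    intro u S x
    rw [List.ofFn_succ]
    by_cases h0 : u 0 ∈ S
    · rw [fstS_cons_mem h0]
      constructor
      · rintro rfl
        exact ⟨0, rfl, h0, fun j hj => absurd hj (by simp)⟩
      · rintro ⟨jx, hjx, hxS, hall⟩
        by_cases hj0 : jx = 0
        · rw [hj0] at hjx; exact hjx
        · exact absurd h0 (hall 0 (Fin.pos_of_ne_zero hj0))
    · rw [fstS_cons_notmem h0, ihm (fun j => u j.succ) S x]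
      constructor
      · rintro ⟨jx, hjx, hxS, hall⟩
        refine ⟨jx.succ, hjx, hxS, fun j hj => ?_⟩
        cases j using Fin.cases with
        | zero => exact h0
        | succ j' => exact hall j' (by rwa [Fin.succ_lt_succ_iff] at hj)
      · rintro ⟨jx, hjx, hxS, hall⟩
        have hj0 : jx ≠ 0 := by rintro rfl; exact h0 (hjx ▸ hxS)
        obtain ⟨j', rfl⟩ := Fin.eq_succ_of_ne_zero hj0
        exact ⟨j', hjx, hxS, fun j hj => hall j.succ (by rwa [Fin.succ_lt_succ_iff])⟩

end Lists

section Transfer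

variable {n k : ℕ}

/-- the suffix read off from a permutation with a fixed prefix. -/
def Phi (hkn : k ≤ n) (π : Equiv.Perm (Fin n)) : List (Fin n) :=
  List.ofFn (fun j : Fin (n - k) => π ⟨k + j.val, by have := j.isLt; omega⟩)

lemma Phi_length (hkn : k ≤ n) (π : Equiv.Perm (Fin n)) : (Phi hkn π).length = n - k :=
  List.length_ofFn

lemma Phi_getElem (hkn : k ≤ n) (π : Equiv.Perm (Fin n)) (j : ℕ)
    (h : j < (Phi hkn π).length) :
    (Phi hkn π)[j] = π ⟨k + j, by have h2 := (Phi_length hkn π) ▸ h; omega⟩ :=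
  List.getElem_ofFn _

/-- candidate inverse: glue the prefix `f` with the list `l`. -/
def gl (f : Fin k → Fin n) (l : List (Fin n)) : Fin n → Fin n :=
  fun i => if h : i.val < k then f ⟨i.val, h⟩ else l.getD (i.val - k) i

lemma Tcard (f : Fin k → Fin n) (hf : Function.Injective f) :
    (Finset.univ \ Finset.image f Finset.univ).card = n - k := by
  rw [Finset.card_sdiff_of_subset (Finset.subset_univ _), Finset.card_univ, Fintype.card_fin,
    Finset.card_image_of_injective _ hf, Finset.card_univ, Fintype.card_fin]

lemma gl_bij (hkn : k ≤ n) (f : Fin k → Fin n) (hf : Function.Injective f)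
    {l : List (Fin n)} (hl : l ∈ PT (Finset.univ \ Finset.image f Finset.univ)) :
    Function.Bijective (gl f l) := by
  rw [← Finite.injective_iff_bijective]
  have hlen : l.length = n - k := by rw [length_of_mem_PT hl, Tcard f hf]
  have hgetmem : ∀ (i : Fin n), ¬ i.val < k → gl f l i ∈ l := by
    intro i h
    show (if h : _ then _ else _) ∈ l
    rw [dif_neg h]
    have hi : i.val - k < l.length := by rw [hlen]; have := i.isLt; omega
    rw [List.getD_eq_getElem _ _ hi]
    exact List.getElem_mem hi
  intro i1 i2 heq
  by_cases h1 : i1.val < k <;> by_cases h2 : i2.val < k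
  · simp only [gl, dif_pos h1, dif_pos h2] at heq
    have := hf heq
    have := Fin.mk.injEq _ _ _ _ ▸ this
    exact Fin.ext (by omega)
  · exfalso
    have hm2 : gl f l i2 ∈ Finset.univ \ Finset.image f Finset.univ :=
      (mem_of_mem_PT hl).mp (hgetmem i2 h2)
    rw [← heq] at hm2
    simp only [gl, dif_pos h1] at hm2
    exact (Finset.mem_sdiff.mp hm2).2 (Finset.mem_image_of_mem f (Finset.mem_univ _))
  · exfalso
    have hm1 : gl f l i1 ∈ Finset.univ \ Finset.image f Finset.univ :=
      (mem_of_mem_PT hl).mp (hgetmem i1 h1)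
    rw [heq] at hm1
    simp only [gl, dif_pos h2] at hm1
    exact (Finset.mem_sdiff.mp hm1).2 (Finset.mem_image_of_mem f (Finset.mem_univ _))
  · simp only [gl, dif_neg h1, dif_neg h2] at heq
    have hi1 : i1.val - k < l.length := by rw [hlen]; have := i1.isLt; omega
    have hi2 : i2.val - k < l.length := by rw [hlen]; have := i2.isLt; omega
    rw [List.getD_eq_getElem _ _ hi1, List.getD_eq_getElem _ _ hi2] at heq
    have := (List.Nodup.getElem_inj_iff (nodup_of_mem_PT hl)).mp heq
    exact Fin.ext (by omega)

lemma transfer (hkn : k ≤ n) (f : Fin k → Fin n) (hf : Function.Injective f)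
    (G : List (Fin n) → ℝ) :
    ∑ π : Equiv.Perm (Fin n),
      (if ∀ i : Fin k, π (Fin.castLE hkn i) = f i then G (Phi hkn π) else 0)
      = ∑ l ∈ PT (Finset.univ \ Finset.image f Finset.univ), G l := by
  rw [← Finset.sum_filter]
  refine Finset.sum_bij' (fun π _ => Phi hkn π)
    (fun l hl => Equiv.ofBijective (gl f l) (gl_bij hkn f hf hl)) ?_ ?_ ?_ ?_ ?_
  · -- maps into PT T
    intro π hπ
    rw [Finset.mem_filter] at hπ
    have hpref := hπ.2
    rw [mem_PT, List.perm_ext_iff_of_nodup ?_ (Finset.sort_nodup _ _)]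
    · intro b
      rw [Finset.mem_sort]
      constructor
      · intro hb
        obtain ⟨j, hj⟩ := List.mem_ofFn.mp hb
        rw [Finset.mem_sdiff]
        refine ⟨Finset.mem_univ b, fun hmem => ?_⟩
        obtain ⟨i, -, hi⟩ := Finset.mem_image.mp hmem
        rw [← hpref i] at hi
        rw [← hj] at hi
        have := π.injective hi
        have hval : (Fin.castLE hkn i).val = k + j.val := congrArg Fin.val this
        simp only [Fin.coe_castLE] at hval
        have := i.isLt
        omega
      · intro hb
        have hge : k ≤ (π.symm b).val := by
          by_contra hlt
          push_neg at hlt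
          have h1 : π (Fin.castLE hkn ⟨(π.symm b).val, hlt⟩) = f ⟨(π.symm b).val, hlt⟩ :=
            hpref _
          have h2 : Fin.castLE hkn ⟨(π.symm b).val, hlt⟩ = π.symm b := Fin.ext rfl
          rw [h2, π.apply_symm_apply] at h1
          exact (Finset.mem_sdiff.mp hb).2
            (h1 ▸ Finset.mem_image_of_mem f (Finset.mem_univ _))
        refine List.mem_ofFn.mpr ⟨⟨(π.symm b).val - k, by have := (π.symm b).isLt; omega⟩, ?_⟩
        have : (⟨k + ((π.symm b).val - k), by have := (π.symm b).isLt; omega⟩ : Fin n)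
            = π.symm b := Fin.ext (by simp; omega)
        show π _ = b
        rw [this, π.apply_symm_apply]
    · exact List.nodup_ofFn.mpr fun j1 j2 h => by
        have := π.injective h
        have hval := congrArg Fin.val this
        simp only at hval
        exact Fin.ext (by omega)
  · -- inverse maps into filter
    intro l hl
    rw [Finset.mem_filter]
    refine ⟨Finset.mem_univ _, fun i => ?_⟩
    show gl f l (Fin.castLE hkn i) = f i
    have hik : (Fin.castLE hkn i).val < k := i.isLt
    rw [gl, dif_pos hik]
    exact congrArg f (Fin.ext rfl)
  · -- left inverse
    intro π hπ
    rw [Finset.mem_filter] at hπ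
    have hpref := hπ.2
    apply Equiv.ext
    intro i
    rw [Equiv.ofBijective_apply]
    by_cases h : i.val < k
    · rw [gl, dif_pos h]
      have := hpref ⟨i.val, h⟩
      have h2 : Fin.castLE hkn ⟨i.val, h⟩ = i := Fin.ext rfl
      rw [h2] at this
      exact this.symm
    · rw [gl, dif_neg h]
      have hi : i.val - k < (Phi hkn π).length := by
        rw [Phi_length]; have := i.isLt; omega
      rw [List.getD_eq_getElem _ _ hi, Phi_getElem]
      exact congrArg π (Fin.ext (by simp; omega))
  · -- right inverse
    intro l hl
    have hlen : l.length = n - k := by rw [length_of_mem_PT hl, Tcard f hf]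
    apply List.ext_getElem
    · rw [Phi_length, hlen]
    · intro j h1 h2
      rw [Phi_getElem]
      rw [Equiv.ofBijective_apply]
      have hj : j < n - k := by rw [Phi_length] at h1; exact h1
      rw [gl, dif_neg (by omega : ¬ k + j < k)]
      rw [show k + j - k = j by omega, List.getD_eq_getElem _ _ h2]
  · intro π hπ
    rfl

end Transfer

section Main

variable {n k : ℕ}

set_option maxHeartbeats 1600000 in
lemma dR_decomp (hk : 1 ≤ k) (hkn : k ≤ n) (f : Fin k → Fin n) :
    ∃ C : ℕ, ∀ π : Equiv.Perm (Fin n),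
      (∀ i : Fin k, π (Fin.castLE hkn i) = f i) →
      dR π = C + Wt (f ⟨k - 1, Nat.sub_lt hk Nat.one_pos⟩) (Phi hkn π) := by
  classical
  refine ⟨∑ i ∈ Finset.range (k - 1), (if h : i < k - 1 then
      (if f ⟨i + 1, by omega⟩ < f ⟨i, by omega⟩ then n - (i + 1) else 0) else 0), ?_⟩
  intro π hπ
  set F : ℕ → ℕ := fun i => if h : i < n - 1 then
      (if π ⟨i + 1, by omega⟩ < π ⟨i, by omega⟩ then n - (i + 1) else 0) else 0 with hF
  have step1 : dR π = ∑ i ∈ Finset.range (n - 1), F i := by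
    rw [← Fin.sum_univ_eq_sum_range F (n - 1)]
    unfold dR
    refine Finset.sum_congr rfl fun i _ => ?_
    simp only [hF]
    rw [dif_pos i.isLt]
  rw [step1, show n - 1 = (k - 1) + (n - k) by omega, Finset.sum_range_add]
  congr 1
  · refine Finset.sum_congr rfl fun i hi => ?_
    have hik : i < k - 1 := Finset.mem_range.mp hi
    simp only [hF]
    rw [dif_pos (by omega : i < n - 1), dif_pos hik]
    have e1 : π ⟨i + 1, by omega⟩ = f ⟨i + 1, by omega⟩ := by
      have h1 := hπ ⟨i + 1, by omega⟩
      have h2 : Fin.castLE hkn ⟨i + 1, by omega⟩ = (⟨i + 1, by omega⟩ : Fin n) :=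
        Fin.ext rfl
      rw [h2] at h1
      exact h1
    have e2 : π ⟨i, by omega⟩ = f ⟨i, by omega⟩ := by
      have h1 := hπ ⟨i, by omega⟩
      have h2 : Fin.castLE hkn ⟨i, by omega⟩ = (⟨i, by omega⟩ : Fin n) := Fin.ext rfl
      rw [h2] at h1
      exact h1
    rw [e1, e2]
  · rw [Wt_eq (f ⟨k - 1, by omega⟩) (f ⟨k - 1, by omega⟩) (Phi hkn π), Phi_length]
    refine Finset.sum_congr rfl fun j hj => ?_
    have hjm : j < n - k := Finset.mem_range.mp hj
    simp only [hF]
    rw [dif_pos (by omega : k - 1 + j < n - 1)]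
    have hcur : (Phi hkn π).getD j (f ⟨k - 1, by omega⟩)
        = π ⟨k - 1 + j + 1, by omega⟩ := by
      rw [List.getD_eq_getElem _ _ (by rw [Phi_length]; omega), Phi_getElem]
      exact congrArg π (Fin.ext (by simp; omega))
    have hprev : ((f ⟨k - 1, by omega⟩ :: Phi hkn π)).getD j (f ⟨k - 1, by omega⟩)
        = π ⟨k - 1 + j, by omega⟩ := by
      cases j with
      | zero =>
        rw [List.getD_cons_zero]
        have h1 := hπ ⟨k - 1, by omega⟩
        have h2 : Fin.castLE hkn ⟨k - 1, by omega⟩ = (⟨k - 1 + 0, by omega⟩ : Fin n) :=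
          Fin.ext (by simp)
        rw [h2] at h1
        exact h1.symm
      | succ j' =>
        rw [List.getD_cons_succ]
        rw [List.getD_eq_getElem _ _ (by rw [Phi_length]; omega), Phi_getElem]
        exact congrArg π (Fin.ext (by simp; omega))
    rw [hcur, hprev, show n - (k - 1 + j + 1) = n - k - j by omega]

set_option maxHeartbeats 1600000 in
lemma event_iff (hkn : k ≤ n) (f : Fin k → Fin n)
    (S : Finset (Fin n)) (x : Fin n) (hx : x ∈ S) (hdisj : ∀ i : Fin k, f i ∉ S)
    (π : Equiv.Perm (Fin n)) (hπ : ∀ i : Fin k, π (Fin.castLE hkn i) = f i) :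
    ((∀ y ∈ S, y ≠ x → π.symm x < π.symm y) ↔ fstS S x (Phi hkn π)) := by
  have hkS : ∀ y ∈ S, k ≤ (π.symm y).val := by
    intro y hy
    by_contra hlt
    push_neg at hlt
    have h1 : π (Fin.castLE hkn ⟨(π.symm y).val, hlt⟩) = f ⟨(π.symm y).val, hlt⟩ := hπ _
    have h2 : Fin.castLE hkn ⟨(π.symm y).val, hlt⟩ = π.symm y := Fin.ext rfl
    rw [h2, π.apply_symm_apply] at h1
    exact hdisj _ (h1 ▸ hy)
  have hPhi : Phi hkn π
      = List.ofFn (fun j : Fin (n - k) => π ⟨k + j.val, by have := j.isLt; omega⟩) := rfl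
  rw [hPhi, fstS_ofFn]
  constructor
  · intro hE
    have hxk := hkS x hx
    have hxlt := (π.symm x).isLt
    refine ⟨⟨(π.symm x).val - k, by omega⟩, ?_, hx, ?_⟩
    · show π ⟨k + ((π.symm x).val - k), by omega⟩ = x
      have he : (⟨k + ((π.symm x).val - k), by omega⟩ : Fin n) = π.symm x :=
        Fin.ext (by simp; omega)
      rw [he, π.apply_symm_apply]
    · intro j hj hmem
      have hjv : j.val < (π.symm x).val - k := Fin.lt_def.mp hj
      have hne : π ⟨k + j.val, by have := j.isLt; omega⟩ ≠ x := by
        intro heq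
        have h3 : π.symm x = ⟨k + j.val, by have := j.isLt; omega⟩ :=
          (Equiv.symm_apply_eq π).mpr heq.symm
        have h4 := congrArg Fin.val h3
        simp only at h4
        omega
      have hlt := hE (π ⟨k + j.val, by have := j.isLt; omega⟩) hmem hne
      rw [π.symm_apply_apply] at hlt
      have h5 := Fin.lt_def.mp hlt
      simp only at h5
      omega
  · rintro ⟨jx, hjx, -, hall⟩ y hy hne
    have hyk := hkS y hy
    have hylt := (π.symm y).isLt
    have hjxlt := jx.isLt
    have hsx : π.symm x = ⟨k + jx.val, by omega⟩ := by
      rw [← hjx, π.symm_apply_apply]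
    have hyval : π ⟨k + ((π.symm y).val - k), by omega⟩ = y := by
      have he : (⟨k + ((π.symm y).val - k), by omega⟩ : Fin n) = π.symm y :=
        Fin.ext (by simp; omega)
      rw [he, π.apply_symm_apply]
    have hcmp : jx.val < (π.symm y).val - k := by
      rcases lt_trichotomy (⟨(π.symm y).val - k, by omega⟩ : Fin (n - k)) jx
        with h | h | h
      · exact absurd
          (show π ⟨k + ((π.symm y).val - k), by omega⟩ ∈ S by rw [hyval]; exact hy)
          (hall _ h)
      · exfalso
        apply hne
        have hv : (π.symm y).val - k = jx.val := congrArg Fin.val h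
        calc y = π ⟨k + ((π.symm y).val - k), by omega⟩ := hyval.symm
          _ = π ⟨k + jx.val, by omega⟩ := congrArg π (Fin.ext (by simp only; omega))
          _ = x := hjx
      · exact Fin.lt_def.mp h
    rw [hsx, Fin.lt_def]
    simp only
    omega

set_option maxHeartbeats 1600000 in
theorem stmt15 (n k : ℕ) (hk : 1 ≤ k) (hkn : k ≤ n) (q : ℝ) (hq0 : 0 < q) (hq1 : q < 1)
    (S : Finset (Fin n)) (hS : S.Nonempty)
    (f : Fin k → Fin n) (hf : Function.Injective f)
    (hdisj : ∀ i : Fin k, f i ∉ S)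
    (x : Fin n) (hx : x ∈ S) :
    (∑ π : Equiv.Perm (Fin n),
        if (∀ i : Fin k, π (Fin.castLE hkn i) = f i) ∧
            (∀ y ∈ S, y ≠ x → π.symm x < π.symm y)
        then q ^ dR π / psi n q else 0) /
      (∑ π : Equiv.Perm (Fin n),
        if ∀ i : Fin k, π (Fin.castLE hkn i) = f i then q ^ dR π / psi n q else 0)
    = (if x < f ⟨k - 1, by omega⟩ then
          q ^ (S.card - (S.filter (fun s => s < f ⟨k - 1, by omega⟩)).card +
            (S.filter (fun s => s < x)).card)
        else
          q ^ ((S.filter (fun s => s < x)).card -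
            (S.filter (fun s => s < f ⟨k - 1, by omega⟩)).card)) /
        ∑ j ∈ Finset.range S.card, q ^ j := by
  classical
  set T : Finset (Fin n) := Finset.univ \ Finset.image f Finset.univ with hT
  have hTsub : S ⊆ T := by
    intro y hy
    rw [hT, Finset.mem_sdiff]
    refine ⟨Finset.mem_univ _, fun hmem => ?_⟩
    obtain ⟨i, -, hi⟩ := Finset.mem_image.mp hmem
    exact hdisj i (hi ▸ hy)
  have hzT : f ⟨k - 1, by omega⟩ ∉ T := by
    rw [hT, Finset.mem_sdiff]
    rintro ⟨-, h⟩
    exact h (Finset.mem_image_of_mem f (Finset.mem_univ _))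
  have hTcard : T.card = n - k := Tcard f hf
  have hpsi : psi n q = qfac q n := rfl
  have hpsipos : 0 < psi n q := by rw [hpsi]; exact qfac_pos hq0 n
  have hMpos : 0 < geo q S.card := geo_pos hq0 (Finset.card_pos.mpr hS)
  obtain ⟨C, hC⟩ := dR_decomp hk hkn f
  have hnum : (∑ π : Equiv.Perm (Fin n),
        if (∀ i : Fin k, π (Fin.castLE hkn i) = f i) ∧
            (∀ y ∈ S, y ≠ x → π.symm x < π.symm y)
        then q ^ dR π / psi n q else 0)
      = (q ^ C / psi n q) *
          ∑ l ∈ PT T, (if fstS S x l then wt q (f ⟨k - 1, by omega⟩) l else 0) := by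
    have step1 : ∀ π : Equiv.Perm (Fin n),
        (if (∀ i : Fin k, π (Fin.castLE hkn i) = f i) ∧
            (∀ y ∈ S, y ≠ x → π.symm x < π.symm y)
          then q ^ dR π / psi n q else 0)
        = (if (∀ i : Fin k, π (Fin.castLE hkn i) = f i) then
            (if fstS S x (Phi hkn π) then
              q ^ C * wt q (f ⟨k - 1, by omega⟩) (Phi hkn π) / psi n q
              else 0) else 0) := by
      intro π
      by_cases hP : ∀ i : Fin k, π (Fin.castLE hkn i) = f i
      · rw [if_pos hP, if_congr (and_iff_right hP) rfl rfl,
          if_congr (event_iff hkn f S x hx hdisj π hP) rfl rfl]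
        by_cases hfst : fstS S x (Phi hkn π)
        · rw [if_pos hfst, if_pos hfst, hC π hP, pow_add, wt_pow]
        · rw [if_neg hfst, if_neg hfst]
      · rw [if_neg (fun hand => hP hand.1), if_neg hP]
    calc (∑ π : Equiv.Perm (Fin n),
        if (∀ i : Fin k, π (Fin.castLE hkn i) = f i) ∧
            (∀ y ∈ S, y ≠ x → π.symm x < π.symm y)
        then q ^ dR π / psi n q else 0)
        = ∑ π : Equiv.Perm (Fin n),
            (if (∀ i : Fin k, π (Fin.castLE hkn i) = f i) then
              (if fstS S x (Phi hkn π) then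
                q ^ C * wt q (f ⟨k - 1, by omega⟩) (Phi hkn π) / psi n q
                else 0) else 0) := Finset.sum_congr rfl (fun π _ => step1 π)
      _ = ∑ l ∈ PT T,
            (if fstS S x l then q ^ C * wt q (f ⟨k - 1, by omega⟩) l / psi n q else 0) :=
          transfer hkn f hf
            (fun l => if fstS S x l then q ^ C * wt q (f ⟨k - 1, by omega⟩) l / psi n q
              else 0)
      _ = (q ^ C / psi n q) * ∑ l ∈ PT T,
            (if fstS S x l then wt q (f ⟨k - 1, by omega⟩) l else 0) := by
          rw [Finset.mul_sum]
          refine Finset.sum_congr rfl fun l _ => ?_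
          by_cases hfst : fstS S x l
          · rw [if_pos hfst, if_pos hfst]
            ring
          · rw [if_neg hfst, if_neg hfst, mul_zero]
  have hden : (∑ π : Equiv.Perm (Fin n),
        if ∀ i : Fin k, π (Fin.castLE hkn i) = f i then q ^ dR π / psi n q else 0)
      = (q ^ C / psi n q) * ∑ l ∈ PT T, wt q (f ⟨k - 1, by omega⟩) l := by
    have step1 : ∀ π : Equiv.Perm (Fin n),
        (if (∀ i : Fin k, π (Fin.castLE hkn i) = f i) then q ^ dR π / psi n q else 0)
        = (if (∀ i : Fin k, π (Fin.castLE hkn i) = f i) then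
            q ^ C * wt q (f ⟨k - 1, by omega⟩) (Phi hkn π) / psi n q
            else 0) := by
      intro π
      by_cases hP : ∀ i : Fin k, π (Fin.castLE hkn i) = f i
      · rw [if_pos hP, if_pos hP, hC π hP, pow_add, wt_pow]
      · rw [if_neg hP, if_neg hP]
    calc (∑ π : Equiv.Perm (Fin n),
        if ∀ i : Fin k, π (Fin.castLE hkn i) = f i then q ^ dR π / psi n q else 0)
        = ∑ π : Equiv.Perm (Fin n),
            (if (∀ i : Fin k, π (Fin.castLE hkn i) = f i) then
              q ^ C * wt q (f ⟨k - 1, by omega⟩) (Phi hkn π) / psi n q else 0) :=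
          Finset.sum_congr rfl (fun π _ => step1 π)
      _ = ∑ l ∈ PT T, q ^ C * wt q (f ⟨k - 1, by omega⟩) l / psi n q :=
          transfer hkn f hf
            (fun l => q ^ C * wt q (f ⟨k - 1, by omega⟩) l / psi n q)
      _ = (q ^ C / psi n q) * ∑ l ∈ PT T, wt q (f ⟨k - 1, by omega⟩) l := by
          rw [Finset.mul_sum]
          refine Finset.sum_congr rfl fun l _ => ?_
          ring
  have hD : ∑ l ∈ PT T, wt q (f ⟨k - 1, by omega⟩) l
      = q ^ rk T (f ⟨k - 1, by omega⟩) * qfac q (n - k) := by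
    rw [dsum_eq q T.card T le_rfl, hTcard]
  have hN : (∑ l ∈ PT T, if fstS S x l then wt q (f ⟨k - 1, by omega⟩) l else 0)
        * geo q S.card
      = q ^ (cexp S (f ⟨k - 1, by omega⟩) x + rk T (f ⟨k - 1, by omega⟩))
        * qfac q (n - k) := by
    rw [nsum_eq q hq0 T.card T S (f ⟨k - 1, by omega⟩) x le_rfl hTsub hx hzT, hTcard]
  have hqfacpos : 0 < qfac q (n - k) := qfac_pos hq0 _
  have hKne : q ^ C / psi n q ≠ 0 := by positivity
  rw [hnum, hden, mul_div_mul_left _ _ hKne]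
  have hfinal : (∑ l ∈ PT T, if fstS S x l then wt q (f ⟨k - 1, by omega⟩) l else 0) /
        (∑ l ∈ PT T, wt q (f ⟨k - 1, by omega⟩) l)
      = q ^ cexp S (f ⟨k - 1, by omega⟩) x / geo q S.card := by
    rw [hD, div_eq_div_iff (by positivity) (ne_of_gt hMpos)]
    rw [hN, pow_add]
    ring
  rw [hfinal]
  congr 1
  · simp only [cexp]
    rw [apply_ite (fun e : ℕ => q ^ e)]
    split_ifs with h1
    · rfl
    · rfl
end Main
end Infra
end
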